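/- arXiv:1806.10868 — 5 statements merged into one kernel-verified Lean document; each statement's English description precedes it below -/
import Mathlib

section
/- Every face F of the cone S^n_+ of n×n positive semidefinite matrices is of the form F = {X ∈ S^n : X ⪰ 0 and range X ⊆ R} for some linear subspace R of ℝ^n; this establishes a correspondence between linear subspaces of ℝ^n and faces of S^n_+. -/
open Matrix

/-- A convex cone: a set closed under addition and under scaling by nonnegative reals. -/
def IsConvexCone {E : Type*} [AddCommMonoid E] [SMul ℝ E] (S : Set E) : Prop :=
  (∀ x ∈ S, ∀ y ∈ S, x + y ∈ S) ∧ ∀ c : ℝ, 0 ≤ c → ∀ x ∈ S, c • x ∈ S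

/-- `F` is a face of the convex cone `K`: a convex subcone such that
`x, y ∈ K`, `x + y ∈ F` implies `x ∈ F` and `y ∈ F`. -/
def IsFaceOf {E : Type*} [AddCommMonoid E] [SMul ℝ E] (K F : Set E) : Prop :=
  IsConvexCone F ∧ F ⊆ K ∧ ∀ x ∈ K, ∀ y ∈ K, x + y ∈ F → x ∈ F ∧ y ∈ F

section Aux

variable {n : ℕ}

/-- For PSD `A`, the kernel of `A + B` is inside the kernel of `A`. -/
lemma ker_add_le_ker_left {A B : Matrix (Fin n) (Fin n) ℝ}
    (hA : A.PosSemidef) (hB : B.PosSemidef) :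
    LinearMap.ker (A + B).mulVecLin ≤ LinearMap.ker A.mulVecLin := by
  intro v hv
  rw [LinearMap.mem_ker, mulVecLin_apply] at hv ⊢
  rw [← hA.dotProduct_mulVec_zero_iff, star_trivial]
  have h0 : v ⬝ᵥ (A + B) *ᵥ v = 0 := by rw [hv, dotProduct_zero]
  rw [add_mulVec, dotProduct_add] at h0
  have h1 := hA.dotProduct_mulVec_nonneg v
  have h2 := hB.dotProduct_mulVec_nonneg v
  rw [star_trivial] at h1 h2
  linarith

/-- For a real Hermitian matrix, the range of `toEuclideanLin` is the orthogonal
complement of the kernel. -/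
lemma range_toEuclideanLin_eq_orth {A : Matrix (Fin n) (Fin n) ℝ} (hA : A.IsHermitian) :
    LinearMap.range (toEuclideanLin A) = (LinearMap.ker (toEuclideanLin A))ᗮ := by
  have hsym : (toEuclideanLin A).IsSymmetric := isHermitian_iff_isSymmetric.mp hA
  have hle : LinearMap.range (toEuclideanLin A) ≤ (LinearMap.ker (toEuclideanLin A))ᗮ := by
    rintro _ ⟨x, rfl⟩
    rw [Submodule.mem_orthogonal]
    intro w hw
    rw [LinearMap.mem_ker] at hw
    rw [← hsym w x, hw, inner_zero_left]
  refine Submodule.eq_of_le_of_finrank_le hle (le_of_eq ?_)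
  have h1 := LinearMap.finrank_range_add_finrank_ker (toEuclideanLin A)
  have h2 := Submodule.finrank_add_finrank_orthogonal (K := LinearMap.ker (toEuclideanLin A))
  omega

/-- For PSD matrices, kernel inclusion implies (reverse) range inclusion. -/
lemma range_le_range_of_ker_le {A B : Matrix (Fin n) (Fin n) ℝ}
    (hA : A.PosSemidef) (hB : B.PosSemidef)
    (h : LinearMap.ker B.mulVecLin ≤ LinearMap.ker A.mulVecLin) :
    LinearMap.range A.mulVecLin ≤ LinearMap.range B.mulVecLin := by
  have hker : LinearMap.ker (toEuclideanLin B) ≤ LinearMap.ker (toEuclideanLin A) := by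
    intro z hz
    rw [LinearMap.mem_ker] at hz ⊢
    have hz' : B *ᵥ (WithLp.equiv 2 _ z) = 0 := congrArg (WithLp.equiv 2 _) hz
    have := h (show (WithLp.equiv 2 _ z) ∈ LinearMap.ker B.mulVecLin from hz')
    rw [LinearMap.mem_ker, mulVecLin_apply] at this
    exact congrArg (WithLp.equiv 2 (Fin n → ℝ)).symm this
  have hrange : LinearMap.range (toEuclideanLin A) ≤ LinearMap.range (toEuclideanLin B) := by
    rw [range_toEuclideanLin_eq_orth hA.1, range_toEuclideanLin_eq_orth hB.1]
    exact Submodule.orthogonal_le hker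
  rintro _ ⟨y, rfl⟩
  obtain ⟨z, hz⟩ := hrange ⟨(WithLp.equiv 2 (Fin n → ℝ)).symm y, rfl⟩
  exact ⟨WithLp.equiv 2 _ z, congrArg (WithLp.equiv 2 (Fin n → ℝ)) hz⟩

lemma dot_conjTranspose_mul (B : Matrix (Fin n) (Fin n) ℝ) (x y : Fin n → ℝ) :
    x ⬝ᵥ (Bᴴ * B) *ᵥ y = (B *ᵥ x) ⬝ᵥ (B *ᵥ y) := by
  have hBt : Bᴴ = Bᵀ := by ext i j; simp
  rw [hBt, ← mulVec_mulVec, dotProduct_mulVec, vecMul_transpose, dotProduct_comm,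
    dotProduct_mulVec, dotProduct_comm]

open scoped MatrixOrder in
lemma psd_exists_sqrt {X : Matrix (Fin n) (Fin n) ℝ} (hX : X.PosSemidef) :
    ∃ S : Matrix (Fin n) (Fin n) ℝ, S.PosSemidef ∧ S * S = X :=
  ⟨CFC.sqrt X, nonneg_iff_posSemidef.mp (CFC.sqrt_nonneg X),
    CFC.sqrt_mul_sqrt_self X (nonneg_iff_posSemidef.mpr hX)⟩

lemma psd_exists_eq_conjTranspose_mul_self {X : Matrix (Fin n) (Fin n) ℝ} (hX : X.PosSemidef) :
    ∃ B : Matrix (Fin n) (Fin n) ℝ, X = Bᴴ * B := by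
  obtain ⟨S, hS, hSS⟩ := psd_exists_sqrt hX
  exact ⟨S, by rw [hS.1.eq]; exact hSS.symm⟩

/-- Cauchy–Schwarz for the PSD bilinear form of `W`. -/
lemma psd_cauchy_schwarz {W : Matrix (Fin n) (Fin n) ℝ} (hW : W.PosSemidef)
    (u w : Fin n → ℝ) :
    ((W *ᵥ u) ⬝ᵥ w) ^ 2 ≤ (u ⬝ᵥ W *ᵥ u) * (w ⬝ᵥ W *ᵥ w) := by
  obtain ⟨B, rfl⟩ := psd_exists_eq_conjTranspose_mul_self hW
  have key2 : ((Bᴴ * B) *ᵥ u) ⬝ᵥ w = (B *ᵥ u) ⬝ᵥ (B *ᵥ w) := by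
    rw [dotProduct_comm, dot_conjTranspose_mul B w u, dotProduct_comm]
  rw [dot_conjTranspose_mul, dot_conjTranspose_mul, key2]
  calc ((B *ᵥ u) ⬝ᵥ (B *ᵥ w)) ^ 2 ≤ (∑ i, (B *ᵥ u) i ^ 2) * (∑ i, (B *ᵥ w) i ^ 2) :=
        Finset.sum_mul_sq_le_sq_mul_sq _ _ _
    _ = ((B *ᵥ u) ⬝ᵥ (B *ᵥ u)) * ((B *ᵥ w) ⬝ᵥ (B *ᵥ w)) := by
        simp [dotProduct, pow_two]

lemma mulVec_vecMulVec (c w : Fin n → ℝ) : (vecMulVec c c) *ᵥ w = (c ⬝ᵥ w) • c := by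
  ext i
  simp [mulVec, dotProduct, vecMulVec_apply, Finset.mul_sum, mul_comm, mul_left_comm]

lemma posSemidef_vecMulVec_self (c : Fin n → ℝ) : (vecMulVec c c).PosSemidef := by
  refine PosSemidef.of_dotProduct_mulVec_nonneg ?_ ?_
  · ext i j; simp [vecMulVec_apply, conjTranspose_apply, mul_comm]
  · intro x
    rw [star_trivial, mulVec_vecMulVec, dotProduct_smul, smul_eq_mul, dotProduct_comm]
    exact mul_self_nonneg _

/-- Quadratic form of a rank-one matrix. -/
lemma dot_vecMulVec (c w : Fin n → ℝ) : w ⬝ᵥ (vecMulVec c c) *ᵥ w = (c ⬝ᵥ w) ^ 2 := by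
  rw [mulVec_vecMulVec, dotProduct_smul, smul_eq_mul, dotProduct_comm, pow_two]

lemma sub_rankOne_psd {W : Matrix (Fin n) (Fin n) ℝ} (hW : W.PosSemidef) (u : Fin n → ℝ) :
    ((u ⬝ᵥ W *ᵥ u) • W - vecMulVec (W *ᵥ u) (W *ᵥ u)).PosSemidef := by
  refine PosSemidef.of_dotProduct_mulVec_nonneg ?_ ?_
  · show _ᴴ = _
    rw [conjTranspose_sub, conjTranspose_smul, hW.1, (posSemidef_vecMulVec_self (W *ᵥ u)).1,
      star_trivial]
  · intro x
    rw [star_trivial, sub_mulVec, dotProduct_sub, dot_vecMulVec, smul_mulVec,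
      dotProduct_smul, smul_eq_mul]
    have := psd_cauchy_schwarz hW u x
    linarith

lemma sq_eq_sum_rankOne {S : Matrix (Fin n) (Fin n) ℝ} (hS : Sᴴ = S) :
    S * S = ∑ i, vecMulVec (fun j => S j i) (fun j => S j i) := by
  ext j k
  simp only [mul_apply, Finset.sum_apply, Matrix.sum_apply, vecMulVec_apply]
  refine Finset.sum_congr rfl fun i _ => ?_
  congr 1
  conv_lhs => rw [← hS]
  simp [conjTranspose_apply]

lemma col_eq_mulVec_single (S : Matrix (Fin n) (Fin n) ℝ) (i : Fin n) :
    (fun j => S j i) = S *ᵥ Pi.single i 1 := by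
  ext j
  simp [mulVec, dotProduct, Pi.single_apply]

end Aux

/-- Every (nonempty) face `F` of the cone of `n×n` positive semidefinite
matrices is of the form `F = {X ∈ S^n : X ⪰ 0 and range X ⊆ R}` for some linear
subspace `R` of `ℝ^n`. -/
theorem face_of_psd_cone_eq_range_face (n : ℕ)
    (F : Set (Matrix (Fin n) (Fin n) ℝ))
    (hFne : F.Nonempty)
    (hF : IsFaceOf {X : Matrix (Fin n) (Fin n) ℝ | X.PosSemidef} F) :
    ∃ R : Submodule ℝ (Fin n → ℝ),
      F = {X : Matrix (Fin n) (Fin n) ℝ |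
        X.PosSemidef ∧ LinearMap.range X.mulVecLin ≤ R} := by
  classical
  obtain ⟨⟨hadd, hsmul⟩, hsub, hface⟩ := hF
  obtain ⟨X₀, hX₀⟩ := hFne
  have h0F : (0 : Matrix (Fin n) (Fin n) ℝ) ∈ F := by
    simpa using hsmul 0 le_rfl X₀ hX₀
  set rk : Matrix (Fin n) (Fin n) ℝ → ℕ :=
    fun X => Module.finrank ℝ (LinearMap.range X.mulVecLin) with hrk
  have hsne : (rk '' F).Nonempty := ⟨rk X₀, X₀, hX₀, rfl⟩
  have hsbdd : BddAbove (rk '' F) := by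
    refine ⟨Module.finrank ℝ (Fin n → ℝ), ?_⟩
    rintro _ ⟨X, _, rfl⟩
    exact Submodule.finrank_le _
  obtain ⟨W, hWF, hWrk⟩ := Nat.sSup_mem hsne hsbdd
  have hWmax : ∀ X ∈ F, rk X ≤ rk W := fun X hX =>
    hWrk ▸ le_csSup hsbdd ⟨X, hX, rfl⟩
  have hWpsd : W.PosSemidef := hsub hWF
  have hclaim : ∀ X ∈ F, LinearMap.range X.mulVecLin ≤ LinearMap.range W.mulVecLin := by
    intro X hXF
    have hXpsd : X.PosSemidef := hsub hXF
    have hWX : W + X ∈ F := hadd W hWF X hXF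
    have hWXpsd : (W + X).PosSemidef := hsub hWX
    have h1 : LinearMap.range W.mulVecLin ≤ LinearMap.range (W + X).mulVecLin :=
      range_le_range_of_ker_le hWpsd hWXpsd (ker_add_le_ker_left hWpsd hXpsd)
    have h2 : LinearMap.range X.mulVecLin ≤ LinearMap.range (W + X).mulVecLin := by
      have h3 := ker_add_le_ker_left hXpsd hWpsd
      rw [add_comm] at h3
      exact range_le_range_of_ker_le hXpsd hWXpsd h3
    have h4 : LinearMap.range W.mulVecLin = LinearMap.range (W + X).mulVecLin :=
      Submodule.eq_of_le_of_finrank_le h1 (hWmax _ hWX)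
    rw [h4]
    exact h2
  refine ⟨LinearMap.range W.mulVecLin, ?_⟩
  ext X
  simp only [Set.mem_setOf_eq]
  constructor
  · exact fun hXF => ⟨hsub hXF, hclaim X hXF⟩
  · rintro ⟨hX, hr⟩
    obtain ⟨S, hSpsd, hSS⟩ := psd_exists_sqrt hX
    have hkXS : LinearMap.ker X.mulVecLin ≤ LinearMap.ker S.mulVecLin := by
      intro v hv
      rw [LinearMap.mem_ker, mulVecLin_apply] at hv ⊢
      have h0 : (S *ᵥ v) ⬝ᵥ (S *ᵥ v) = 0 := by
        rw [← dot_conjTranspose_mul S v v, hSpsd.1, hSS, hv, dotProduct_zero]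
      exact dotProduct_self_eq_zero.mp h0
    have hrSX : LinearMap.range S.mulVecLin ≤ LinearMap.range X.mulVecLin :=
      range_le_range_of_ker_le hSpsd hX hkXS
    have hMF : ∀ i : Fin n,
        vecMulVec (fun j => S j i) (fun j => S j i) ∈ F := by
      intro i
      have hc : (fun j => S j i) ∈ LinearMap.range W.mulVecLin :=
        hr (hrSX ⟨Pi.single i 1, (col_eq_mulVec_single S i).symm⟩)
      obtain ⟨u, hu⟩ := hc
      rw [mulVecLin_apply] at hu
      have ht : (0:ℝ) ≤ u ⬝ᵥ W *ᵥ u := by simpa using hWpsd.dotProduct_mulVec_nonneg u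
      have hsubpsd : ((u ⬝ᵥ W *ᵥ u) • W -
          vecMulVec (fun j => S j i) (fun j => S j i)).PosSemidef := by
        rw [← hu]; exact sub_rankOne_psd hWpsd u
      have hinF : (u ⬝ᵥ W *ᵥ u) • W ∈ F := hsmul _ ht W hWF
      have hsum : vecMulVec (fun j => S j i) (fun j => S j i) +
          ((u ⬝ᵥ W *ᵥ u) • W - vecMulVec (fun j => S j i) (fun j => S j i))
          = (u ⬝ᵥ W *ᵥ u) • W := by abel
      exact (hface _ (posSemidef_vecMulVec_self _) _ hsubpsd (by rw [hsum]; exact hinF)).1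
    rw [← hSS, sq_eq_sum_rankOne hSpsd.1]
    exact Finset.sum_induction _ (· ∈ F) (fun a b ha hb => hadd a ha b hb) h0F
      (fun i _ => hMF i)
end

section
/- Let K be a closed convex cone in a finite-dimensional real vector space. Then the relative interiors of the faces of K partition K: every point of K lies in the relative interior of exactly one face of K. -/
/-- The relative interior of a convex set `C`: the points `x ∈ C` such that for every
`y ∈ C` there are `z ∈ C` and `0 < α < 1` with `x = α • y + (1 - α) • z`. -/
def relint {E : Type*} [AddCommGroup E] [Module ℝ E] (C : Set E) : Set E :=
  {x ∈ C | ∀ y ∈ C, ∃ z ∈ C, ∃ α : ℝ, 0 < α ∧ α < 1 ∧ x = α • y + (1 - α) • z}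

/-- For a closed convex cone `K` in a finite-dimensional real vector space,
the relative interiors of the faces of `K` partition `K`: every point of `K` lies in the
relative interior of exactly one face of `K`. -/
theorem relint_faces_partition
    {E : Type*} [NormedAddCommGroup E] [NormedSpace ℝ E] [FiniteDimensional ℝ E]
    (K : Set E) (hK : IsConvexCone K) (hKcl : IsClosed K) :
    ∀ x ∈ K, ∃! F : Set E, IsFaceOf K F ∧ x ∈ relint F := by
  intro x hx
  obtain ⟨hadd, hsmul⟩ := hK
  set F : Set E := {y ∈ K | ∃ t : ℝ, 0 < t ∧ t • x - y ∈ K} with hFdef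
  have hFsub : F ⊆ K := fun y hy => hy.1
  have hxF : x ∈ F := by
    refine ⟨hx, 2, by norm_num, ?_⟩
    have : (2 : ℝ) • x - x = x := by
      rw [two_smul]; abel
    rw [this]; exact hx
  have hface : IsFaceOf K F := by
    refine ⟨⟨?_, ?_⟩, hFsub, ?_⟩
    · rintro a ⟨haK, s, hs, hsK⟩ b ⟨hbK, t, ht, htK⟩
      refine ⟨hadd a haK b hbK, s + t, by linarith, ?_⟩
      have : (s + t) • x - (a + b) = (s • x - a) + (t • x - b) := by
        rw [add_smul]; abel
      rw [this]; exact hadd _ hsK _ htK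
    · rintro c hc a ⟨haK, s, hs, hsK⟩
      rcases eq_or_lt_of_le hc with hc0 | hc0
      · refine ⟨hsmul c hc a haK, 1, one_pos, ?_⟩
        rw [← hc0, zero_smul, sub_zero, one_smul]; exact hx
      · refine ⟨hsmul c hc a haK, c * s, mul_pos hc0 hs, ?_⟩
        have : (c * s) • x - c • a = c • (s • x - a) := by
          rw [smul_sub, mul_smul]
        rw [this]; exact hsmul c hc _ hsK
    · rintro a haK b hbK ⟨habK, t, ht, htK⟩
      constructor
      · refine ⟨haK, t, ht, ?_⟩
        have : t • x - a = (t • x - (a + b)) + b := by abel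
        rw [this]; exact hadd _ htK _ hbK
      · refine ⟨hbK, t, ht, ?_⟩
        have : t • x - b = (t • x - (a + b)) + a := by abel
        rw [this]; exact hadd _ htK _ haK
  have hrelint : x ∈ relint F := by
    refine ⟨hxF, ?_⟩
    rintro y ⟨hyK, t, ht, htK⟩
    set α : ℝ := 1 / (1 + t) with hα
    have h1t : (0:ℝ) < 1 + t := by linarith
    have hα0 : 0 < α := by positivity
    have hα1 : α < 1 := by
      rw [hα, div_lt_one h1t]; linarith
    have hαt : 1 - α * t = α := by
      rw [hα, div_mul_eq_mul_div, one_mul, one_sub_div h1t.ne', add_sub_cancel_right]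
    have h1α : (0:ℝ) < 1 - α := by linarith
    have hxαy : x - α • y ∈ K := by
      have heq : x - α • y = α • (t • x - y) + (1 - α * t) • x := by
        rw [smul_sub, smul_smul, sub_smul, one_smul]; abel
      rw [heq]
      exact hadd _ (hsmul α hα0.le _ htK) _ (hsmul _ (by rw [hαt]; exact hα0.le) _ hx)
    set z : E := (1 - α)⁻¹ • (x - α • y) with hz
    have hzK : z ∈ K := hsmul _ (by positivity) _ hxαy
    refine ⟨z, ⟨hzK, (1 - α)⁻¹, inv_pos.mpr h1α, ?_⟩, α, hα0, hα1, ?_⟩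
    · have heq : (1 - α)⁻¹ • x - z = (1 - α)⁻¹ • (α • y) := by
        rw [hz, smul_sub]; abel
      rw [heq]
      exact hsmul _ (by positivity) _ (hsmul _ hα0.le _ hyK)
    · rw [hz, smul_inv_smul₀ (by linarith : (1:ℝ) - α ≠ 0)]; abel
  refine ⟨F, ⟨hface, hrelint⟩, ?_⟩
  rintro F' ⟨⟨⟨hF'add, hF'smul⟩, hF'sub, hF'face⟩, hxF', hxri⟩
  ext y
  constructor
  · intro hy
    obtain ⟨z, hzF', α, hα0, hα1, hxeq⟩ := hxri y hy
    refine ⟨hF'sub hy, α⁻¹, inv_pos.mpr hα0, ?_⟩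
    have : α⁻¹ • x - y = (α⁻¹ * (1 - α)) • z := by
      rw [hxeq, smul_add, smul_smul, inv_mul_cancel₀ hα0.ne', one_smul, mul_smul]
      abel
    rw [this]
    exact hsmul _ (mul_nonneg (inv_pos.mpr hα0).le (by linarith)) _ (hF'sub hzF')
  · rintro ⟨hyK, t, ht, htK⟩
    have htx : t • x ∈ F' := hF'smul t ht.le x hxF'
    have := hF'face _ htK _ hyK (by rw [sub_add_cancel]; exact htx)
    exact this.2
end

section
/- (Correctness of one facial reduction step.) Let C, A₁, …, A_m ∈ S^n and b ∈ ℝ^m, and suppose y ∈ ℝ^m satisfies W := Σᵢ yᵢ Aᵢ ⪰ 0 and Σᵢ bᵢ yᵢ = 0. Let r = dim(ker W) and let V ∈ ℝ^{n×r} be a matrix whose columns form an orthonormal basis of ker W. Then the map X' ↦ V X' Vᵀ is a bijection from the feasible set {X' ∈ S^r : X' ⪰ 0, Aᵢ • (V X' Vᵀ) = bᵢ for all i} of the reduced problem onto the feasible set {X ∈ S^n : X ⪰ 0, Aᵢ • X = bᵢ for all i} of the original problem, and it preserves the objective: C • (V X' Vᵀ) = (VᵀCV) • X'. Consequently the two problems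 have equal optimal values. -/
open Matrix
open scoped BigOperators

lemma real_conjTranspose_eq_transpose {m n : Type*} (M : Matrix m n ℝ) : Mᴴ = Mᵀ := by
  ext i j; simp [conjTranspose_apply]

lemma trace_transpose_mul_self_eq_zero {m n : ℕ} {M : Matrix (Fin m) (Fin n) ℝ}
    (h : (Mᵀ * M).trace = 0) : M = 0 := by
  have h2 : ∑ j, ∑ i, M i j * M i j = 0 := by
    simpa [Matrix.trace, Matrix.mul_apply, Matrix.diag] using h
  ext i j
  have hn : ∀ j ∈ Finset.univ, (0:ℝ) ≤ ∑ i, M i j * M i j :=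
    fun j _ => Finset.sum_nonneg fun i _ => mul_self_nonneg _
  have hj := (Finset.sum_eq_zero_iff_of_nonneg hn).1 h2 j (Finset.mem_univ j)
  have hi := (Finset.sum_eq_zero_iff_of_nonneg
    (fun i _ => mul_self_nonneg (M i j))).1 hj i (Finset.mem_univ i)
  simpa [mul_self_eq_zero] using hi

open scoped MatrixOrder in
lemma psd_mul_eq_zero_of_trace_eq_zero {n : ℕ} {W X : Matrix (Fin n) (Fin n) ℝ}
    (hW : W.PosSemidef) (hX : X.PosSemidef) (h : (W * X).trace = 0) : W * X = 0 := by
  set S := CFC.sqrt W with hS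
  set T := CFC.sqrt X with hT
  have hSh : Sᵀ = S := by
    rw [← real_conjTranspose_eq_transpose]; exact (CFC.sqrt_nonneg W).posSemidef.isHermitian
  have hTh : Tᵀ = T := by
    rw [← real_conjTranspose_eq_transpose]; exact (CFC.sqrt_nonneg X).posSemidef.isHermitian
  have hWS : S * S = W := CFC.sqrt_mul_sqrt_self W hW.nonneg
  have hXT : T * T = X := CFC.sqrt_mul_sqrt_self X hX.nonneg
  have key : ((S * T)ᵀ * (S * T)).trace = 0 := by
    rw [transpose_mul, hSh, hTh]
    have e1 : T * S * (S * T) = T * (S * S * T) := by noncomm_ring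
    rw [e1, Matrix.trace_mul_comm, show S * S * T * T = W * X by rw [← hWS, ← hXT]; noncomm_ring]
    exact h
  have hST : S * T = 0 := trace_transpose_mul_self_eq_zero key
  have : W * X = S * (S * T) * T := by rw [← hWS, ← hXT]; noncomm_ring
  rw [this, hST]
  simp

/-- Correctness of one facial reduction step: with
`W := Σᵢ yᵢ Aᵢ ⪰ 0` and `Σᵢ bᵢ yᵢ = 0`, `r = dim ker W`, and `V ∈ ℝ^{n×r}` whose
columns form an orthonormal basis of `ker W`, the map `X' ↦ V X' Vᵀ` is a bijection
from the feasible set of the reduced SDP onto the feasible set of the original SDP,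
it preserves the objective (`C • (V X' Vᵀ) = (VᵀCV) • X'`), and the two problems have
equal optimal values. -/
theorem facial_reduction_step_correct (n r m : ℕ)
    (C : Matrix (Fin n) (Fin n) ℝ) (hC : C.IsSymm)
    (A : Fin m → Matrix (Fin n) (Fin n) ℝ) (hA : ∀ i, (A i).IsSymm)
    (b : Fin m → ℝ) (y : Fin m → ℝ)
    (hW : (∑ i, y i • A i).PosSemidef)
    (hby : ∑ i, b i * y i = 0)
    (hr : r = Module.finrank ℝ (LinearMap.ker (∑ i, y i • A i).mulVecLin))
    (V : Matrix (Fin n) (Fin r) ℝ)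
    (hVortho : Vᵀ * V = 1)
    (hVspan : LinearMap.range V.mulVecLin =
      LinearMap.ker (∑ i, y i • A i).mulVecLin) :
    Set.BijOn (fun X' : Matrix (Fin r) (Fin r) ℝ => V * X' * Vᵀ)
      {X' : Matrix (Fin r) (Fin r) ℝ |
        X'.PosSemidef ∧ ∀ i, ((A i)ᵀ * (V * X' * Vᵀ)).trace = b i}
      {X : Matrix (Fin n) (Fin n) ℝ |
        X.PosSemidef ∧ ∀ i, ((A i)ᵀ * X).trace = b i} ∧
    (∀ X' : Matrix (Fin r) (Fin r) ℝ,
      (Cᵀ * (V * X' * Vᵀ)).trace = ((Vᵀ * C * V)ᵀ * X').trace) ∧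
    sInf ((fun X : Matrix (Fin n) (Fin n) ℝ => (Cᵀ * X).trace) ''
        {X : Matrix (Fin n) (Fin n) ℝ |
          X.PosSemidef ∧ ∀ i, ((A i)ᵀ * X).trace = b i}) =
      sInf ((fun X' : Matrix (Fin r) (Fin r) ℝ => ((Vᵀ * C * V)ᵀ * X').trace) ''
        {X' : Matrix (Fin r) (Fin r) ℝ |
          X'.PosSemidef ∧ ∀ i, ((A i)ᵀ * (V * X' * Vᵀ)).trace = b i}) := by
  have hcancel : ∀ X' : Matrix (Fin r) (Fin r) ℝ, Vᵀ * (V * X' * Vᵀ) * V = X' := by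
    intro X'
    have e : Vᵀ * (V * X' * Vᵀ) * V = (Vᵀ * V) * X' * (Vᵀ * V) := by
      simp only [Matrix.mul_assoc]
    rw [e, hVortho]; simp
  -- Maps to
  have hmaps : Set.MapsTo (fun X' : Matrix (Fin r) (Fin r) ℝ => V * X' * Vᵀ)
      {X' : Matrix (Fin r) (Fin r) ℝ |
        X'.PosSemidef ∧ ∀ i, ((A i)ᵀ * (V * X' * Vᵀ)).trace = b i}
      {X : Matrix (Fin n) (Fin n) ℝ |
        X.PosSemidef ∧ ∀ i, ((A i)ᵀ * X).trace = b i} := by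
    rintro X' ⟨hpsd, hfeas⟩
    refine ⟨?_, hfeas⟩
    have := hpsd.mul_mul_conjTranspose_same V
    rwa [real_conjTranspose_eq_transpose] at this
  -- Injective
  have hinj : Set.InjOn (fun X' : Matrix (Fin r) (Fin r) ℝ => V * X' * Vᵀ)
      {X' : Matrix (Fin r) (Fin r) ℝ |
        X'.PosSemidef ∧ ∀ i, ((A i)ᵀ * (V * X' * Vᵀ)).trace = b i} := by
    intro X1 _ X2 _ h
    have := congrArg (fun M => Vᵀ * M * V) h
    simpa [hcancel] using this
  -- Surjective
  have hsurj : Set.SurjOn (fun X' : Matrix (Fin r) (Fin r) ℝ => V * X' * Vᵀ)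
      {X' : Matrix (Fin r) (Fin r) ℝ |
        X'.PosSemidef ∧ ∀ i, ((A i)ᵀ * (V * X' * Vᵀ)).trace = b i}
      {X : Matrix (Fin n) (Fin n) ℝ |
        X.PosSemidef ∧ ∀ i, ((A i)ᵀ * X).trace = b i} := by
    rintro X ⟨hpsd, hfeas⟩
    have htr : ((∑ i, y i • A i) * X).trace = 0 := by
      have e : (∑ i, y i • A i) * X = ∑ i, y i • (A i * X) := by
        rw [Finset.sum_mul]
        exact Finset.sum_congr rfl fun i _ => smul_mul_assoc _ _ _
      rw [e, trace_sum]
      have hAi : ∀ i, (A i * X).trace = b i := by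
        intro i
        rw [← (hA i)]; exact hfeas i
      calc ∑ i, (y i • (A i * X)).trace = ∑ i, y i * b i := by
            simp [trace_smul, hAi, smul_eq_mul]
        _ = ∑ i, b i * y i := by simp [mul_comm]
        _ = 0 := hby
    have hWX : (∑ i, y i • A i) * X = 0 :=
      psd_mul_eq_zero_of_trace_eq_zero hW hpsd htr
    have hproj : V * Vᵀ * X = X := by
      have hcol : ∀ j, ∃ c, V.mulVec c = fun i => X i j := by
        intro j
        have hker : (fun i => X i j) ∈ LinearMap.ker (∑ i, y i • A i).mulVecLin := by
          rw [LinearMap.mem_ker, mulVecLin_apply]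
          funext k
          have := congrFun (congrFun hWX k) j
          simpa [Matrix.mulVec, dotProduct, Matrix.mul_apply] using this
        rw [← hVspan] at hker
        obtain ⟨c, hc⟩ := hker
        exact ⟨c, hc⟩
      ext k j
      obtain ⟨c, hc⟩ := hcol j
      have e1 : (V * Vᵀ * X) k j = ((V * Vᵀ).mulVec fun i => X i j) k := by
        simp [Matrix.mulVec, dotProduct, Matrix.mul_apply]
      rw [e1, ← hc, Matrix.mulVec_mulVec]
      have e2 : V * Vᵀ * V = V := by rw [Matrix.mul_assoc, hVortho, Matrix.mul_one]
      rw [e2, hc]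
    have hsymm : Xᵀ = X := by
      rw [← real_conjTranspose_eq_transpose]; exact hpsd.isHermitian
    have hproj2 : X * (V * Vᵀ) = X := by
      have := congrArg Matrix.transpose hproj
      rw [transpose_mul, transpose_mul, transpose_transpose, hsymm] at this
      rw [← Matrix.mul_assoc]
      simpa [Matrix.mul_assoc] using this
    refine ⟨Vᵀ * X * V, ?_, ?_⟩
    · have hXeq : V * (Vᵀ * X * V) * Vᵀ = X := by
        have e : V * (Vᵀ * X * V) * Vᵀ = (V * Vᵀ * X) * (V * Vᵀ) := by
          simp only [Matrix.mul_assoc]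
        rw [e, hproj, hproj2]
      constructor
      · have := hpsd.mul_mul_conjTranspose_same Vᵀ
        rwa [real_conjTranspose_eq_transpose, transpose_transpose] at this
      · intro i; rw [hXeq]; exact hfeas i
    · show V * (Vᵀ * X * V) * Vᵀ = X
      have e : V * (Vᵀ * X * V) * Vᵀ = (V * Vᵀ * X) * (V * Vᵀ) := by
        simp only [Matrix.mul_assoc]
      rw [e, hproj, hproj2]
  have hbij : Set.BijOn (fun X' : Matrix (Fin r) (Fin r) ℝ => V * X' * Vᵀ)
      {X' : Matrix (Fin r) (Fin r) ℝ |
        X'.PosSemidef ∧ ∀ i, ((A i)ᵀ * (V * X' * Vᵀ)).trace = b i}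
      {X : Matrix (Fin n) (Fin n) ℝ |
        X.PosSemidef ∧ ∀ i, ((A i)ᵀ * X).trace = b i} := ⟨hmaps, hinj, hsurj⟩
  have hobj : ∀ X' : Matrix (Fin r) (Fin r) ℝ,
      (Cᵀ * (V * X' * Vᵀ)).trace = ((Vᵀ * C * V)ᵀ * X').trace := by
    intro X'
    have e1 : Cᵀ * (V * X' * Vᵀ) = (Cᵀ * V * X') * Vᵀ := by
      simp only [Matrix.mul_assoc]
    rw [e1, Matrix.trace_mul_comm]
    have e2 : Vᵀ * (Cᵀ * V * X') = ((Vᵀ * C * V)ᵀ) * X' := by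
      rw [transpose_mul, transpose_mul, transpose_transpose]
      simp only [Matrix.mul_assoc]
    rw [e2]
  refine ⟨hbij, hobj, ?_⟩
  have himg : (fun X : Matrix (Fin n) (Fin n) ℝ => (Cᵀ * X).trace) ''
      {X : Matrix (Fin n) (Fin n) ℝ |
        X.PosSemidef ∧ ∀ i, ((A i)ᵀ * X).trace = b i} =
      (fun X' : Matrix (Fin r) (Fin r) ℝ => ((Vᵀ * C * V)ᵀ * X').trace) ''
      {X' : Matrix (Fin r) (Fin r) ℝ |
        X'.PosSemidef ∧ ∀ i, ((A i)ᵀ * (V * X' * Vᵀ)).trace = b i} := by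
    rw [← hbij.image_eq, ← Set.image_comp]
    exact Set.image_congr fun X' _ => hobj X'
  rw [himg]
end

section
/- (Strong duality under Slater's condition.) Let C, A₁, …, A_m ∈ S^n and b ∈ ℝ^m. Suppose the primal SDP min{C • X : Aᵢ • X = bᵢ for i = 1,…,m, X ⪰ 0} admits a strictly feasible point (a positive definite feasible X) and its optimal value is finite (bounded below). Then the dual SDP max{Σᵢ bᵢ yᵢ : y ∈ ℝ^m, C − Σᵢ yᵢ Aᵢ ⪰ 0} attains its optimum, and its optimal value equals the optimal value of the primal. -/
open Matrix
open scoped BigOperators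

namespace SDPAux

variable {n : ℕ}

lemma trace_expand (M X : Matrix (Fin n) (Fin n) ℝ) :
    (Mᵀ * X).trace = ∑ j, ∑ i, M i j * X i j := by
  simp [Matrix.trace, Matrix.diag, Matrix.mul_apply, Matrix.transpose_apply]

lemma dot_expand (M : Matrix (Fin n) (Fin n) ℝ) (v : Fin n → ℝ) :
    v ⬝ᵥ (M *ᵥ v) = ∑ i, ∑ j, v i * (M i j * v j) := by
  simp [dotProduct, mulVec, Finset.mul_sum]

lemma trace_vecMulVec (M : Matrix (Fin n) (Fin n) ℝ) (v : Fin n → ℝ) :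
    (Mᵀ * vecMulVec v v).trace = v ⬝ᵥ (M *ᵥ v) := by
  rw [trace_expand, dot_expand, Finset.sum_comm]
  exact Finset.sum_congr rfl fun i _ => Finset.sum_congr rfl fun j _ => by
    simp [vecMulVec_apply]; ring

lemma psd_smul {A : Matrix (Fin n) (Fin n) ℝ} (hA : A.PosSemidef) {c : ℝ} (hc : 0 ≤ c) :
    (c • A).PosSemidef := by
  refine posSemidef_iff_dotProduct_mulVec.mpr ⟨?_, fun x => ?_⟩
  · have := hA.1
    unfold Matrix.IsHermitian at *
    rw [conjTranspose_smul, this]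
    simp
  · rw [smul_mulVec, dotProduct_smul, smul_eq_mul]
    exact mul_nonneg hc (hA.dotProduct_mulVec_nonneg x)

lemma psd_vecMulVec (v : Fin n → ℝ) : (vecMulVec v v).PosSemidef := by
  refine posSemidef_iff_dotProduct_mulVec.mpr ⟨?_, fun x => ?_⟩
  · unfold Matrix.IsHermitian
    ext i j
    simp [vecMulVec_apply, conjTranspose_apply, mul_comm]
  · have h : (star x) ⬝ᵥ (vecMulVec v v *ᵥ x) = (∑ i, x i * v i) ^ 2 := by
      simp only [star_trivial, dotProduct, mulVec, vecMulVec_apply]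
      rw [sq, Finset.sum_mul_sum]
      refine Finset.sum_congr rfl fun i _ => ?_
      rw [Finset.mul_sum]
      exact Finset.sum_congr rfl fun j _ => by ring
    rw [h]
    positivity

lemma psd_trace_nonneg {A : Matrix (Fin n) (Fin n) ℝ} (hA : A.PosSemidef) : 0 ≤ A.trace := by
  have h : ∀ i, 0 ≤ A i i := by
    intro i
    have := hA.dotProduct_mulVec_nonneg (Pi.single i 1)
    simpa using this
  exact Fintype.sum_nonneg h

lemma psd_inner_nonneg {Z X : Matrix (Fin n) (Fin n) ℝ} (hZ : Z.PosSemidef) (hX : X.PosSemidef) :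
    0 ≤ (Zᵀ * X).trace := by
  obtain ⟨B, rfl⟩ : ∃ B : Matrix (Fin n) (Fin n) ℝ, X = Bᵀ * B := by
    open scoped MatrixOrder Matrix.Norms.L2Operator in
    obtain ⟨B, hB⟩ := CStarAlgebra.nonneg_iff_eq_star_mul_self.mp hX.nonneg
    exact ⟨B, by rw [hB, star_eq_conjTranspose, conjTranspose_eq_transpose_of_trivial]⟩
  have hZt : Zᵀ = Z := by
    rw [← conjTranspose_eq_transpose_of_trivial]; exact hZ.1
  rw [hZt, ← Matrix.mul_assoc, trace_mul_cycle]
  exact psd_trace_nonneg (hZ.mul_mul_conjTranspose_same B)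


variable {n m : ℕ}

lemma dot_transpose (M : Matrix (Fin n) (Fin n) ℝ) (v : Fin n → ℝ) :
    v ⬝ᵥ (Mᵀ *ᵥ v) = v ⬝ᵥ (M *ᵥ v) := by
  rw [dot_expand, dot_expand, Finset.sum_comm]
  exact Finset.sum_congr rfl fun i _ => Finset.sum_congr rfl fun j _ => by
    simp [transpose_apply]; ring

lemma trace_mul_transpose_right (M X : Matrix (Fin n) (Fin n) ℝ) (hM : Mᵀ = M) :
    (Mᵀ * Xᵀ).trace = (Mᵀ * X).trace := by
  have hM' : ∀ i j, M j i = M i j := fun i j => by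
    simpa using congrFun (congrFun hM i) j
  rw [trace_expand, trace_expand]
  simp only [transpose_apply]
  calc ∑ j, ∑ i, M i j * X j i = ∑ j, ∑ i, M j i * X j i :=
        Finset.sum_congr rfl fun j _ => Finset.sum_congr rfl fun i _ => by rw [hM' j i]
    _ = ∑ j, ∑ i, M i j * X i j := Finset.sum_comm

lemma ip_smul_add (M X₁ X₂ : Matrix (Fin n) (Fin n) ℝ) (a b : ℝ) :
    (Mᵀ * (a • X₁ + b • X₂)).trace = a * (Mᵀ * X₁).trace + b * (Mᵀ * X₂).trace := by
  rw [Matrix.mul_add, trace_add, Matrix.mul_smul, Matrix.mul_smul, trace_smul, trace_smul]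
  simp

lemma ip_sub_sum (C : Matrix (Fin n) (Fin n) ℝ) (A : Fin m → Matrix (Fin n) (Fin n) ℝ)
    (y : Fin m → ℝ) (X : Matrix (Fin n) (Fin n) ℝ) :
    ((C - ∑ i, y i • A i)ᵀ * X).trace
      = (Cᵀ * X).trace - ∑ i, y i * ((A i)ᵀ * X).trace := by
  rw [transpose_sub, Matrix.sub_mul, trace_sub, transpose_sum]
  simp only [transpose_smul]
  rw [Finset.sum_mul]
  simp_rw [Matrix.smul_mul]
  rw [trace_sum]
  simp [trace_smul]

section Norms
attribute [local instance] Matrix.normedAddCommGroup Matrix.normedSpace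

lemma entry_abs_le (Δ : Matrix (Fin n) (Fin n) ℝ) (i j : Fin n) : |Δ i j| ≤ ‖Δ‖ := by
  have := Δ.norm_entry_le_entrywise_sup_norm (i := i) (j := j)
  simpa [Real.norm_eq_abs] using this

lemma vabs_le (v : Fin n → ℝ) (i : Fin n) : |v i| ≤ ‖v‖ := by
  have := norm_le_pi_norm v i
  simpa [Real.norm_eq_abs] using this

lemma quad_bound (Δ : Matrix (Fin n) (Fin n) ℝ) (v : Fin n → ℝ) :
    |v ⬝ᵥ (Δ *ᵥ v)| ≤ (n : ℝ)^2 * ‖Δ‖ * ‖v‖^2 := by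
  rw [dot_expand]
  have h1 : ∀ i j : Fin n, |v i * (Δ i j * v j)| ≤ ‖v‖ * (‖Δ‖ * ‖v‖) := by
    intro i j
    rw [abs_mul, abs_mul]
    have h0Δ : (0:ℝ) ≤ ‖Δ‖ := norm_nonneg _
    have h0v : (0:ℝ) ≤ ‖v‖ := norm_nonneg _
    exact mul_le_mul (vabs_le v i)
      (mul_le_mul (entry_abs_le Δ i j) (vabs_le v j) (abs_nonneg _) h0Δ)
      (mul_nonneg (abs_nonneg _) (abs_nonneg _)) h0v
  calc |∑ i, ∑ j, v i * (Δ i j * v j)| ≤ ∑ i, |∑ j, v i * (Δ i j * v j)| :=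
        Finset.abs_sum_le_sum_abs _ _
    _ ≤ ∑ i : Fin n, ∑ j : Fin n, |v i * (Δ i j * v j)| :=
        Finset.sum_le_sum fun i _ => Finset.abs_sum_le_sum_abs _ _
    _ ≤ ∑ _i : Fin n, ∑ _j : Fin n, ‖v‖ * (‖Δ‖ * ‖v‖) :=
        Finset.sum_le_sum fun i _ => Finset.sum_le_sum fun j _ => h1 i j
    _ = (n:ℝ) * ((n:ℝ) * (‖v‖ * (‖Δ‖ * ‖v‖))) := by
        simp [Finset.sum_const, Finset.card_univ, mul_assoc]
    _ = (n : ℝ)^2 * ‖Δ‖ * ‖v‖^2 := by ring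

lemma trace_abs_bound (M Δ : Matrix (Fin n) (Fin n) ℝ) :
    |(Mᵀ * Δ).trace| ≤ (∑ i, ∑ j, |M i j|) * ‖Δ‖ := by
  rw [trace_expand]
  calc |∑ j, ∑ i, M i j * Δ i j| ≤ ∑ j, ∑ i, |M i j * Δ i j| := by
        refine (Finset.abs_sum_le_sum_abs _ _).trans ?_
        exact Finset.sum_le_sum fun j _ => Finset.abs_sum_le_sum_abs _ _
    _ ≤ ∑ j, ∑ i, |M i j| * ‖Δ‖ := by
        refine Finset.sum_le_sum fun j _ => Finset.sum_le_sum fun i _ => ?_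
        rw [abs_mul]
        exact mul_le_mul_of_nonneg_left (entry_abs_le Δ i j) (abs_nonneg _)
    _ = (∑ j, ∑ i, |M i j|) * ‖Δ‖ := by
        rw [Finset.sum_mul]
        exact Finset.sum_congr rfl fun j _ => (Finset.sum_mul _ _ _).symm
    _ = (∑ i, ∑ j, |M i j|) * ‖Δ‖ := by rw [Finset.sum_comm]

end Norms

variable {n : ℕ}

lemma quad_smul (M : Matrix (Fin n) (Fin n) ℝ) (a : ℝ) (v : Fin n → ℝ) :
    (a • v) ⬝ᵥ (M *ᵥ (a • v)) = a ^ 2 * (v ⬝ᵥ (M *ᵥ v)) := by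
  rw [dot_expand, dot_expand, Finset.mul_sum]
  refine Finset.sum_congr rfl fun i _ => ?_
  rw [Finset.mul_sum]
  refine Finset.sum_congr rfl fun j _ => ?_
  simp only [Pi.smul_apply, smul_eq_mul]
  ring

lemma quad_continuous (M : Matrix (Fin n) (Fin n) ℝ) :
    Continuous fun v : Fin n → ℝ => v ⬝ᵥ (M *ᵥ v) := by
  simp only [dot_expand]
  refine continuous_finset_sum _ fun i _ => continuous_finset_sum _ fun j _ => ?_
  exact (continuous_apply i).mul (continuous_const.mul (continuous_apply j))

section Norms
attribute [local instance] Matrix.normedAddCommGroup Matrix.normedSpace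

lemma posdef_quad_lb {X₀ : Matrix (Fin n) (Fin n) ℝ} (h : X₀.PosDef) :
    ∃ c > 0, ∀ v : Fin n → ℝ, c * ‖v‖^2 ≤ v ⬝ᵥ (X₀ *ᵥ v) := by
  rcases Nat.eq_zero_or_pos n with hn | hn
  · subst hn
    refine ⟨1, one_pos, fun v => ?_⟩
    have hv : v = 0 := funext fun i => absurd i.2 (by omega)
    rw [hv, norm_zero]
    simp
  · set f : (Fin n → ℝ) → ℝ := fun v => v ⬝ᵥ (X₀ *ᵥ v) with hf
    have hfc : Continuous f := quad_continuous X₀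
    have hK : IsCompact (Metric.sphere (0 : Fin n → ℝ) 1) := isCompact_sphere _ _
    have hsingle : ‖(Pi.single (⟨0, hn⟩ : Fin n) (1:ℝ) : Fin n → ℝ)‖ = 1 := by
      refine le_antisymm ?_ ?_
      · rw [pi_norm_le_iff_of_nonneg zero_le_one]
        intro i
        rcases eq_or_ne i ⟨0, hn⟩ with rfl | hne
        · simp
        · simp [Pi.single_eq_of_ne hne]
      · simpa using norm_le_pi_norm ((Pi.single (⟨0, hn⟩ : Fin n) (1:ℝ) : Fin n → ℝ)) ⟨0, hn⟩
    have hne : (Metric.sphere (0 : Fin n → ℝ) 1).Nonempty :=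
      ⟨(Pi.single (⟨0, hn⟩ : Fin n) (1:ℝ) : Fin n → ℝ), by
        simpa [mem_sphere_zero_iff_norm] using hsingle⟩
    obtain ⟨v₁, hv₁, hmin'⟩ := hK.exists_isMinOn hne hfc.continuousOn
    have hmin : ∀ w ∈ Metric.sphere (0 : Fin n → ℝ) 1, f v₁ ≤ f w := fun w hw => hmin' hw
    have hv₁n : ‖v₁‖ = 1 := mem_sphere_zero_iff_norm.mp hv₁
    have hv₁0 : v₁ ≠ 0 := by
      intro h0; rw [h0, norm_zero] at hv₁n; exact one_ne_zero hv₁n.symm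
    have hc : 0 < f v₁ := by simpa using h.dotProduct_mulVec_pos hv₁0
    refine ⟨f v₁, hc, fun v => ?_⟩
    rcases eq_or_ne v 0 with rfl | hv0
    · simp
    · have hvn : 0 < ‖v‖ := norm_pos_iff.mpr hv0
      set w : Fin n → ℝ := ‖v‖⁻¹ • v with hw
      have hwn : ‖w‖ = 1 := by
        rw [hw, norm_smul, norm_inv, norm_norm]
        field_simp
      have hfw : f w = (‖v‖⁻¹)^2 * f v := quad_smul X₀ _ v
      have hle : f v₁ ≤ f w := hmin w (mem_sphere_zero_iff_norm.mpr hwn)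
      calc f v₁ * ‖v‖^2 ≤ ((‖v‖⁻¹)^2 * f v) * ‖v‖^2 := by
            rw [← hfw]; exact mul_le_mul_of_nonneg_right hle (sq_nonneg _)
        _ = f v := by field_simp
  
lemma posdef_perturb {X₀ : Matrix (Fin n) (Fin n) ℝ} (h : X₀.PosDef) :
    ∃ ε > 0, ∀ Δ : Matrix (Fin n) (Fin n) ℝ, ‖Δ‖ < ε →
      ∀ v : Fin n → ℝ, v ≠ 0 → 0 < v ⬝ᵥ ((X₀ + Δ) *ᵥ v) := by
  obtain ⟨c, hc, hq⟩ := posdef_quad_lb h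
  refine ⟨c / ((n:ℝ)^2 + 1), by positivity, fun Δ hΔ v hv => ?_⟩
  have hb := quad_bound Δ v
  have hvn : 0 < ‖v‖ := norm_pos_iff.mpr hv
  have hexp : v ⬝ᵥ ((X₀ + Δ) *ᵥ v) = v ⬝ᵥ (X₀ *ᵥ v) + v ⬝ᵥ (Δ *ᵥ v) := by
    rw [add_mulVec, dotProduct_add]
  rw [hexp]
  have h1 := hq v
  have h2 : -((n:ℝ)^2 * ‖Δ‖ * ‖v‖^2) ≤ v ⬝ᵥ (Δ *ᵥ v) := neg_le_of_abs_le hb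
  have hΔ0 : 0 ≤ ‖Δ‖ := norm_nonneg _
  have key : ((n:ℝ)^2 + 1) * ‖Δ‖ < c := by
    have hpos : (0:ℝ) < (n:ℝ)^2 + 1 := by positivity
    calc ((n:ℝ)^2 + 1) * ‖Δ‖ < ((n:ℝ)^2 + 1) * (c / ((n:ℝ)^2 + 1)) := by
          exact mul_lt_mul_of_pos_left hΔ hpos
      _ = c := by field_simp
  have hgap : 0 < c - (n:ℝ)^2 * ‖Δ‖ := by nlinarith
  nlinarith [mul_pos hgap (mul_pos hvn hvn), sq_nonneg ‖v‖, mul_pos hvn hvn]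

lemma sym_posdef_of_near {X₀ : Matrix (Fin n) (Fin n) ℝ} (h : X₀.PosDef) :
    ∃ ε > 0, ∀ X : Matrix (Fin n) (Fin n) ℝ, ‖X - X₀‖ < ε →
      ((2⁻¹ : ℝ) • (X + Xᵀ)).PosDef := by
  obtain ⟨ε, hε, hp⟩ := posdef_perturb h
  refine ⟨ε, hε, fun X hX => ?_⟩
  refine posDef_iff_dotProduct_mulVec.mpr ⟨?_, ?_⟩
  · show ((2⁻¹ : ℝ) • (X + Xᵀ))ᴴ = _
    rw [conjTranspose_eq_transpose_of_trivial, transpose_smul, transpose_add,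
      transpose_transpose, add_comm Xᵀ X]
  · intro v hv
    have hq : v ⬝ᵥ (((2⁻¹ : ℝ) • (X + Xᵀ)) *ᵥ v) = v ⬝ᵥ (X *ᵥ v) := by
      rw [smul_mulVec, dotProduct_smul, add_mulVec, dotProduct_add, dot_transpose]
      simp; ring
    have hpos := hp (X - X₀) hX v hv
    have hXX : X₀ + (X - X₀) = X := by abel
    rw [hXX] at hpos
    have goal_eq : star v ⬝ᵥ (((2⁻¹ : ℝ) • (X + Xᵀ)) *ᵥ v) = v ⬝ᵥ (X *ᵥ v) := by
      rw [star_trivial]; exact hq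
    rw [goal_eq]
    exact hpos

end Norms

end SDPAux

open SDPAux Matrix Set
open scoped BigOperators

attribute [local instance] Matrix.normedAddCommGroup Matrix.normedSpace


attribute [local instance] Matrix.normedAddCommGroup Matrix.normedSpace

set_option maxHeartbeats 1000000 in
/-- Strong duality under Slater's condition: if the primal SDP
`min {C • X : Aᵢ • X = bᵢ, X ⪰ 0}` has a strictly feasible (positive definite) point
and its objective is bounded below on the feasible set, then the dual SDP
`max {Σᵢ bᵢ yᵢ : C − Σᵢ yᵢ Aᵢ ⪰ 0}` attains its optimum, and its optimal value equals
the optimal value of the primal. -/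
theorem sdp_strong_duality (n m : ℕ)
    (C : Matrix (Fin n) (Fin n) ℝ) (hC : C.IsSymm)
    (A : Fin m → Matrix (Fin n) (Fin n) ℝ) (hA : ∀ i, (A i).IsSymm)
    (b : Fin m → ℝ)
    (hSlater : ∃ X : Matrix (Fin n) (Fin n) ℝ,
      X.PosDef ∧ ∀ i, ((A i)ᵀ * X).trace = b i)
    (hbdd : BddBelow ((fun X : Matrix (Fin n) (Fin n) ℝ => (Cᵀ * X).trace) ''
      {X : Matrix (Fin n) (Fin n) ℝ |
        X.PosSemidef ∧ ∀ i, ((A i)ᵀ * X).trace = b i})) :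
    ∃ y : Fin m → ℝ,
      (C - ∑ i, y i • A i).PosSemidef ∧
      (∀ y' : Fin m → ℝ, (C - ∑ i, y' i • A i).PosSemidef →
        ∑ i, b i * y' i ≤ ∑ i, b i * y i) ∧
      ∑ i, b i * y i =
        sInf ((fun X : Matrix (Fin n) (Fin n) ℝ => (Cᵀ * X).trace) ''
          {X : Matrix (Fin n) (Fin n) ℝ |
            X.PosSemidef ∧ ∀ i, ((A i)ᵀ * X).trace = b i}) := by
  classical
  obtain ⟨X₀, hX₀pd, hX₀feas⟩ := hSlater
  set Feas : Set (Matrix (Fin n) (Fin n) ℝ) :=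
    {X : Matrix (Fin n) (Fin n) ℝ |
      X.PosSemidef ∧ ∀ i, ((A i)ᵀ * X).trace = b i} with hFeasDef
  set S : Set ℝ := (fun X : Matrix (Fin n) (Fin n) ℝ => (Cᵀ * X).trace) '' Feas with hSDef
  have hX₀mem : X₀ ∈ Feas := ⟨hX₀pd.posSemidef, hX₀feas⟩
  have hSne : S.Nonempty := ⟨_, ⟨X₀, hX₀mem, rfl⟩⟩
  set p : ℝ := sInf S with hpDef
  have hple : ∀ X ∈ Feas, p ≤ (Cᵀ * X).trace := fun X hX => csInf_le hbdd ⟨X, hX, rfl⟩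
  -- the linear map X ↦ (Aᵢ • X)ᵢ
  set L : Matrix (Fin n) (Fin n) ℝ →ₗ[ℝ] (Fin m → ℝ) :=
    { toFun := fun X i => ((A i)ᵀ * X).trace
      map_add' := fun X Y => funext fun i => by
        simp [Matrix.mul_add, trace_add]
      map_smul' := fun c X => funext fun i => by
        simp [Matrix.mul_smul, trace_smul] } with hLDef
  have hLapp : ∀ X i, L X i = ((A i)ᵀ * X).trace := fun X i => rfl
  set W : Submodule ℝ (Fin m → ℝ) := LinearMap.range L with hWDef
  obtain ⟨W', hWW'⟩ := W.exists_isCompl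
  haveI : CompleteSpace (Matrix (Fin n) (Fin n) ℝ) := FiniteDimensional.complete ℝ _
  haveI : CompleteSpace W' := FiniteDimensional.complete ℝ _
  set Ψlin : (Matrix (Fin n) (Fin n) ℝ × W') →ₗ[ℝ] (Fin m → ℝ) :=
    L.comp (LinearMap.fst ℝ _ _) + (W'.subtype).comp (LinearMap.snd ℝ _ _) with hΨlinDef
  set Ψ : (Matrix (Fin n) (Fin n) ℝ × W') →L[ℝ] (Fin m → ℝ) :=
    LinearMap.toContinuousLinearMap Ψlin with hΨDef
  have hΨapp : ∀ q : Matrix (Fin n) (Fin n) ℝ × W', Ψ q = L q.1 + (q.2 : Fin m → ℝ) := by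
    intro q
    simp [hΨDef, hΨlinDef]
  have hΨsurj : Function.Surjective Ψ := by
    intro u
    have hu : u ∈ W ⊔ W' := by rw [hWW'.sup_eq_top]; trivial
    obtain ⟨x, hx, z, hz, hxz⟩ := Submodule.mem_sup.mp hu
    obtain ⟨X, rfl⟩ := hx
    exact ⟨(X, ⟨z, hz⟩), by rw [hΨapp]; exact hxz⟩
  -- strict feasibility neighborhood
  obtain ⟨ε, hε, hsym⟩ := sym_posdef_of_near hX₀pd
  set KC : ℝ := ∑ i, ∑ j, |C i j| with hKCDef
  have hKC0 : 0 ≤ KC := Finset.sum_nonneg fun i _ => Finset.sum_nonneg fun j _ => abs_nonneg _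
  set ε' : ℝ := min ε (1 / (KC + 1)) with hε'Def
  have hε'pos : 0 < ε' := lt_min hε (by positivity)
  have hLX₀ : L X₀ = b := funext fun i => hX₀feas i
  have hΨX₀ : Ψ (X₀, (0 : W')) = b := by rw [hΨapp]; simp [hLX₀]
  have himopen : IsOpen (Ψ '' (Metric.ball X₀ ε' ×ˢ (univ : Set W'))) :=
    (ContinuousLinearMap.isOpenMap Ψ hΨsurj) _ (Metric.isOpen_ball.prod isOpen_univ)
  have hbmem : b ∈ Ψ '' (Metric.ball X₀ ε' ×ˢ (univ : Set W')) :=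
    ⟨(X₀, 0), ⟨Metric.mem_ball_self hε'pos, mem_univ _⟩, hΨX₀⟩
  obtain ⟨δ, hδ, hball⟩ := Metric.isOpen_iff.mp himopen b hbmem
  set T₀ : ℝ := (Cᵀ * X₀).trace + 1 with hT₀Def
  -- the convex set for separation
  set Mt : Set ((Fin m → ℝ) × ℝ) :=
    {q : (Fin m → ℝ) × ℝ | ∃ X : Matrix (Fin n) (Fin n) ℝ, ∃ w : Fin m → ℝ,
      X.PosSemidef ∧ w ∈ W' ∧
      q.1 = (fun i => ((A i)ᵀ * X).trace - b i) + w ∧ (Cᵀ * X).trace < q.2} with hMtDef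
  have key_ball : ∀ u : Fin m → ℝ, ‖u‖ < δ → ∀ t : ℝ, T₀ ≤ t → (u, t) ∈ Mt := by
    intro u hu t ht
    have hmemball : b + u ∈ Metric.ball b δ := by
      rw [Metric.mem_ball, dist_eq_norm]
      simpa using hu
    obtain ⟨⟨X, w⟩, ⟨hXball, -⟩, hΨeq⟩ := hball hmemball
    rw [hΨapp] at hΨeq
    have hXnear : ‖X - X₀‖ < ε' := by
      rw [Metric.mem_ball, dist_eq_norm] at hXball
      exact hXball
    set X' : Matrix (Fin n) (Fin n) ℝ := (2⁻¹ : ℝ) • (X + Xᵀ) with hX'Def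
    have hX'pd : X'.PosDef := hsym X (lt_of_lt_of_le hXnear (min_le_left _ _))
    have hipX' : ∀ M : Matrix (Fin n) (Fin n) ℝ, Mᵀ = M →
        (Mᵀ * X').trace = (Mᵀ * X).trace := by
      intro M hM
      have : X' = (2⁻¹ : ℝ) • X + (2⁻¹ : ℝ) • Xᵀ := by rw [hX'Def, smul_add]
      rw [this, ip_smul_add, trace_mul_transpose_right M X hM]
      ring
    have hcost : (Cᵀ * X').trace < t := by
      have hCX' : (Cᵀ * X').trace = (Cᵀ * X).trace := hipX' C hC
      have hsplit : (Cᵀ * X).trace = (Cᵀ * X₀).trace + (Cᵀ * (X - X₀)).trace := by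
        rw [Matrix.mul_sub, trace_sub]; ring
      have habs := trace_abs_bound C (X - X₀)
      have hb1 : KC * ‖X - X₀‖ ≤ KC * (1 / (KC + 1)) := by
        refine mul_le_mul_of_nonneg_left ?_ hKC0
        exact le_of_lt (lt_of_lt_of_le hXnear (min_le_right _ _))
      have hb2 : KC * (1 / (KC + 1)) < 1 := by
        rw [mul_one_div, div_lt_one (by positivity)]
        linarith
      have : |(Cᵀ * (X - X₀)).trace| < 1 := lt_of_le_of_lt (habs.trans hb1) hb2
      have h1 : (Cᵀ * (X - X₀)).trace < 1 := lt_of_le_of_lt (le_abs_self _) this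
      rw [hCX', hsplit]
      have : (Cᵀ * X₀).trace + 1 ≤ t := ht
      linarith
    refine ⟨X', w, hX'pd.posSemidef, w.2, ?_, hcost⟩
    funext i
    have hi := congrFun hΨeq i
    simp only [Pi.add_apply] at hi ⊢
    have hAi : ((A i)ᵀ * X').trace = ((A i)ᵀ * X).trace := hipX' (A i) (hA i)
    rw [hAi]
    have : L X i = ((A i)ᵀ * X).trace := hLapp X i
    rw [this] at hi
    linarith
  have hMtconv : Convex ℝ Mt := by
    rintro q₁ ⟨X₁, w₁, hX₁, hw₁, he₁, hc₁⟩ q₂ ⟨X₂, w₂, hX₂, hw₂, he₂, hc₂⟩ a c ha hc hac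
    refine ⟨a • X₁ + c • X₂, a • w₁ + c • w₂, (psd_smul hX₁ ha).add (psd_smul hX₂ hc),
      W'.add_mem (W'.smul_mem a hw₁) (W'.smul_mem c hw₂), ?_, ?_⟩
    · funext i
      have e₁ : q₁.1 i = ((A i)ᵀ * X₁).trace - b i + w₁ i := by rw [he₁]; simp
      have e₂ : q₂.1 i = ((A i)ᵀ * X₂).trace - b i + w₂ i := by rw [he₂]; simp
      have hip := ip_smul_add (A i) X₁ X₂ a c
      simp only [Prod.fst_add, Prod.smul_fst, Pi.add_apply, Pi.smul_apply, smul_eq_mul, hip]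
      rw [e₁, e₂]
      have hac' : a + c = 1 := hac
      linear_combination (-(b i)) * hac'
    · have hip := ip_smul_add C X₁ X₂ a c
      simp only [Prod.snd_add, Prod.smul_snd, smul_eq_mul, hip]
      rcases eq_or_lt_of_le ha with haz | hapos
      · have hc1 : c = 1 := by linarith
        rw [← haz, hc1]; simpa using hc₂
      · have h1 : a * (Cᵀ * X₁).trace < a * q₁.2 := by
          exact mul_lt_mul_of_pos_left hc₁ hapos
        have h2 : c * (Cᵀ * X₂).trace ≤ c * q₂.2 :=
          mul_le_mul_of_nonneg_left hc₂.le hc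
        linarith
  have hnotin : ((0 : Fin m → ℝ), p) ∉ Mt := by
    rintro ⟨X, w, hX, hw, heq, hlt⟩
    simp only at heq hlt
    have hvW : (fun i => ((A i)ᵀ * X).trace - b i) ∈ W := by
      refine ⟨X - X₀, ?_⟩
      funext i
      rw [hLapp (X - X₀) i, Matrix.mul_sub, trace_sub, hX₀feas i]
    have hveq : (fun i => ((A i)ᵀ * X).trace - b i) = -w := by
      have := heq.symm
      funext i
      have hi := congrFun this i
      simp only [Pi.add_apply, Pi.zero_apply] at hi
      simp only [Pi.neg_apply]
      linarith
    have hwW : w ∈ W := by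
      have : -w ∈ W := hveq ▸ hvW
      simpa using W.neg_mem this
    have hw0 : w = 0 := (Submodule.disjoint_def.mp hWW'.disjoint) w hwW hw
    have hfeas : X ∈ Feas := by
      refine ⟨hX, fun i => ?_⟩
      have hi := congrFun hveq i
      rw [hw0] at hi
      simp only [Pi.neg_apply, Pi.zero_apply, neg_zero] at hi
      linarith
    exact absurd hlt (not_lt.mpr (hple X hfeas))
  -- separation
  have hOsub : (Metric.ball (0 : Fin m → ℝ) δ ×ˢ Ioi T₀) ⊆ Mt := by
    rintro ⟨u, t⟩ ⟨hu, ht⟩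
    have hu' : ‖u‖ < δ := by
      rw [Metric.mem_ball, dist_zero_right] at hu
      exact hu
    exact key_ball u hu' t (le_of_lt ht)
  have ha₀ : ((0 : Fin m → ℝ), T₀ + 1) ∈ interior Mt := by
    refine interior_maximal hOsub (Metric.isOpen_ball.prod isOpen_Ioi) ?_
    exact ⟨Metric.mem_ball_self hδ, lt_add_one T₀⟩
  obtain ⟨f, hf⟩ := geometric_hahn_banach_open_point (hMtconv.interior)
    isOpen_interior (fun h => hnotin (interior_subset h))
  have hsep : ∀ q ∈ Mt, f q ≤ f ((0 : Fin m → ℝ), p) := by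
    intro q hq
    set a₀ : (Fin m → ℝ) × ℝ := ((0 : Fin m → ℝ), T₀ + 1) with ha₀Def
    have hcomb : ∀ θ : ℝ, 0 < θ → θ ≤ 1 → f (θ • a₀ + (1 - θ) • q) < f ((0 : Fin m → ℝ), p) :=
      fun θ h1 h2 => hf _ (hMtconv.combo_interior_closure_mem_interior ha₀
        (subset_closure hq) h1 (by linarith) (by ring))
    have hcont : Continuous fun θ : ℝ => f (θ • a₀ + (1 - θ) • q) := by
      refine f.continuous.comp ?_
      exact (continuous_id.smul continuous_const).add
        ((continuous_const.sub continuous_id).smul continuous_const)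
    have hval : f ((0:ℝ) • a₀ + (1 - (0:ℝ)) • q) = f q := by norm_num
    have ht : Filter.Tendsto (fun θ : ℝ => f (θ • a₀ + (1 - θ) • q))
        (nhdsWithin (0:ℝ) (Ioi 0)) (nhds (f q)) := by
      have h0 : Filter.Tendsto (fun θ : ℝ => f (θ • a₀ + (1 - θ) • q))
          (nhds (0:ℝ)) (nhds (f q)) := by
        have := hcont.tendsto 0
        rwa [hval] at this
      exact h0.mono_left nhdsWithin_le_nhds
    refine le_of_tendsto ht ?_
    filter_upwards [Ioc_mem_nhdsGT_of_mem (Set.left_mem_Ico.mpr one_pos)] with θ hθ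
    exact (hcomb θ hθ.1 hθ.2).le
  set μ : ℝ := f ((0 : Fin m → ℝ), (1 : ℝ)) with hμDef
  set cf : Fin m → ℝ := fun i => f ((Pi.single i 1 : Fin m → ℝ), (0 : ℝ)) with hcfDef
  have hdecomp : ∀ (u : Fin m → ℝ) (t : ℝ), f (u, t) = (∑ i, u i * cf i) + t * μ := by
    intro u t
    have h1 : ((u, t) : (Fin m → ℝ) × ℝ)
        = ((u, 0) : (Fin m → ℝ) × ℝ) + t • (((0 : Fin m → ℝ), (1 : ℝ)) : (Fin m → ℝ) × ℝ) := by
      rw [Prod.ext_iff]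
      constructor
      · simp
      · simp
    have h2 : ((u, (0:ℝ)) : (Fin m → ℝ) × ℝ)
        = ∑ i, u i • (((Pi.single i 1 : Fin m → ℝ), (0:ℝ)) : (Fin m → ℝ) × ℝ) := by
      rw [Prod.ext_iff]
      constructor
      · rw [Prod.fst_sum]
        simp only [Prod.smul_fst]
        refine (pi_eq_sum_univ u).trans (Finset.sum_congr rfl fun i _ => ?_)
        congr 1
        funext j
        simp [Pi.single_apply, eq_comm]
      · rw [Prod.snd_sum]
        simp
    rw [h1, map_add, _root_.map_smul, h2, map_sum]
    simp only [_root_.map_smul, smul_eq_mul]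
    rfl
  have hfzp : f ((0 : Fin m → ℝ), p) = p * μ := by
    rw [hdecomp]
    simp
  have hμle : μ ≤ 0 := by
    by_contra hpos
    push_neg at hpos
    have hmem : ((0 : Fin m → ℝ), max T₀ (p + 1)) ∈ Mt :=
      key_ball 0 (by simpa using hδ) _ (le_max_left _ _)
    have := hsep _ hmem
    rw [hdecomp, hfzp] at this
    simp only [Pi.zero_apply, zero_mul, Finset.sum_const_zero, zero_add] at this
    have h1 : max T₀ (p + 1) ≤ p := le_of_mul_le_mul_right (by linarith) hpos
    have h2 : p + 1 ≤ max T₀ (p + 1) := le_max_right _ _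
    linarith
  have hμneg : μ < 0 := by
    rcases lt_or_eq_of_le hμle with h | h
    · exact h
    -- μ = 0 : derive contradiction
    exfalso
    have hcf0 : ∀ u : Fin m → ℝ, ‖u‖ < δ → (∑ i, u i * cf i) ≤ 0 := by
      intro u hu
      have hmem : (u, max T₀ (p+1)) ∈ Mt := key_ball u hu _ (le_max_left _ _)
      have := hsep _ hmem
      rw [hdecomp, hfzp, h] at this
      simpa using this
    have hzero : ∀ u : Fin m → ℝ, ‖u‖ < δ → (∑ i, u i * cf i) = 0 := by
      intro u hu
      have h1 := hcf0 u hu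
      have h2 := hcf0 (-u) (by simpa using hu)
      have : ∑ i, (-u) i * cf i = -(∑ i, u i * cf i) := by
        rw [← Finset.sum_neg_distrib]
        exact Finset.sum_congr rfl fun i _ => by simp
      rw [this] at h2
      linarith
    have hall : ∀ u : Fin m → ℝ, (∑ i, u i * cf i) = 0 := by
      intro u
      rcases eq_or_ne u 0 with rfl | hu0
      · simp
      · have hun : 0 < ‖u‖ := norm_pos_iff.mpr hu0
        set s : ℝ := δ / (2 * ‖u‖) with hsDef
        have hs : 0 < s := by positivity
        have hsu : ‖s • u‖ < δ := by
          rw [norm_smul, Real.norm_eq_abs, abs_of_pos hs, hsDef]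
          rw [div_mul_eq_mul_div, mul_comm]
          rw [div_lt_iff₀ (by positivity)]
          nlinarith
        have := hzero (s • u) hsu
        have hexp : ∑ i, (s • u) i * cf i = s * ∑ i, u i * cf i := by
          rw [Finset.mul_sum]
          exact Finset.sum_congr rfl fun i _ => by simp [mul_assoc]
        rw [hexp] at this
        exact (mul_eq_zero.mp this).resolve_left (ne_of_gt hs)
    have hf0 : ∀ q : (Fin m → ℝ) × ℝ, f q = 0 := by
      intro q
      have : f (q.1, q.2) = 0 := by
        rw [hdecomp, hall, h]
        simp
      simpa using this
    have := hf _ ha₀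
    rw [hf0, hf0] at this
    exact lt_irrefl 0 this
  set ν : ℝ := -μ with hνDef
  have hνpos : 0 < ν := by simp [hνDef]; linarith
  set y : Fin m → ℝ := fun i => cf i / ν with hyDef
  -- main inequality from separation
  have hμν : μ = -ν := by rw [hνDef]; ring
  have hcfy : ∀ i, cf i = y i * ν := fun i => by
    rw [hyDef]; field_simp
  have hZlb : ∀ X : Matrix (Fin n) (Fin n) ℝ, X.PosSemidef →
      p - ∑ i, y i * b i ≤ ((C - ∑ i, y i • A i)ᵀ * X).trace := by
    intro X hX
    set v : Fin m → ℝ := fun i => ((A i)ᵀ * X).trace - b i with hvDef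
    have hbase : (∑ i, v i * cf i) + (Cᵀ * X).trace * μ ≤ p * μ := by
      have heps : ∀ e : ℝ, 0 < e →
          (∑ i, v i * cf i) + ((Cᵀ * X).trace + e) * μ ≤ p * μ := by
        intro e he
        have hmem : ((v, (Cᵀ * X).trace + e) : (Fin m → ℝ) × ℝ) ∈ Mt := by
          refine ⟨X, 0, hX, W'.zero_mem, ?_, ?_⟩
          · simp [hvDef]
          · simp only
            linarith
        have := hsep _ hmem
        rwa [hdecomp, hfzp] at this
      refine le_of_forall_pos_le_add ?_
      intro e' he'
      have h1 := heps (e' / ν) (by positivity)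
      have h2 : (e' / ν) * ν = e' := div_mul_cancel₀ e' (ne_of_gt hνpos)
      have h3 : ((Cᵀ * X).trace + e' / ν) * μ
          = (Cᵀ * X).trace * μ - (e' / ν) * ν := by
        rw [hμν]; ring
      linarith
    rw [ip_sub_sum]
    have hsum : ∑ i, v i * cf i
        = ν * ((∑ i, y i * ((A i)ᵀ * X).trace) - ∑ i, y i * b i) := by
      rw [mul_sub, Finset.mul_sum, Finset.mul_sum, ← Finset.sum_sub_distrib]
      refine Finset.sum_congr rfl fun i _ => ?_
      rw [hcfy i]
      simp only [hvDef]
      ring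
    rw [hsum, hμν] at hbase
    have h4 : ν * (((∑ i, y i * ((A i)ᵀ * X).trace) - ∑ i, y i * b i)
        - (Cᵀ * X).trace + p) ≤ 0 := by linarith only [hbase]
    have h5 : ((∑ i, y i * ((A i)ᵀ * X).trace) - ∑ i, y i * b i)
        - (Cᵀ * X).trace + p ≤ 0 := by
      by_contra hEpos
      push_neg at hEpos
      have hcontra := mul_pos hνpos hEpos
      linarith only [h4, hcontra]
    linarith only [h5]
  have hZpsd : (C - ∑ i, y i • A i).PosSemidef := by
    have hZt : (C - ∑ i, y i • A i)ᵀ = C - ∑ i, y i • A i := by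
      rw [transpose_sub, transpose_sum]
      simp only [transpose_smul]
      rw [hC]
      congr 1
      exact Finset.sum_congr rfl fun i _ => by rw [hA i]
    refine posSemidef_iff_dotProduct_mulVec.mpr ⟨?_, fun x => ?_⟩
    · show (C - ∑ i, y i • A i)ᴴ = _
      rw [conjTranspose_eq_transpose_of_trivial, hZt]
    · rw [star_trivial]
      by_contra hneg
      push_neg at hneg
      set qv : ℝ := x ⬝ᵥ ((C - ∑ i, y i • A i) *ᵥ x) with hqvDef
      set β : ℝ := p - ∑ i, y i * b i with hβDef
      have hqneg : qv < 0 := hneg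
      set s : ℝ := (|β| + 1) / (-qv) with hsDef
      have hspos : 0 < s := div_pos (by positivity) (by linarith)
      have hpsd := psd_smul (psd_vecMulVec x) hspos.le
      have hlb := hZlb (s • vecMulVec x x) hpsd
      rw [Matrix.mul_smul, trace_smul, trace_vecMulVec, smul_eq_mul] at hlb
      have hq0 : qv ≠ 0 := ne_of_lt hqneg
      have hsq : s * qv = -(|β| + 1) := by
        rw [hsDef, div_mul_eq_mul_div, mul_div_assoc, div_neg, div_self hq0,
          mul_neg, mul_one]
      rw [← hqvDef] at hlb
      rw [hsq] at hlb
      have := neg_abs_le β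
      linarith
  have hpleby : p ≤ ∑ i, y i * b i := by
    have h0 := hZlb 0 Matrix.PosSemidef.zero
    rw [Matrix.mul_zero, trace_zero] at h0
    linarith
  have hweak : ∀ y' : Fin m → ℝ, (C - ∑ i, y' i • A i).PosSemidef →
      ∑ i, b i * y' i ≤ p := by
    intro y' hy'
    refine le_csInf hSne ?_
    rintro r ⟨X, hXfeas, rfl⟩
    have h0 := psd_inner_nonneg hy' hXfeas.1
    rw [ip_sub_sum] at h0
    have hsum : ∑ i, y' i * ((A i)ᵀ * X).trace = ∑ i, b i * y' i :=
      Finset.sum_congr rfl fun i _ => by rw [hXfeas.2 i]; ring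
    linarith
  have hby : ∑ i, b i * y i = p := by
    refine le_antisymm (hweak y hZpsd) ?_
    have : ∑ i, y i * b i = ∑ i, b i * y i :=
      Finset.sum_congr rfl fun i _ => mul_comm _ _
    linarith
  exact ⟨y, hZpsd, fun y' hy' => (hweak y' hy').trans hby.ge, hby⟩
end

section
/- (Positive semidefinite matrix completion over chordal patterns, used to justify the matrix-completion reformulation MC(Q).) Let G = (N, E) be a chordal simple graph on N = {1, …, n} containing all loops implicitly (every diagonal position is specified), and let X be a partial symmetric matrix specified exactly on the diagonal and on positions (i, j) with (i, j) ∈ E. If for every maximal clique C of G the fully specified principal submatrix X[C] is positive semidefinite, then X can be completed to a full n×n positive semidefinite symmetric matrix, i.e., there exists a positive semidefinite X̂ ∈ S^n agreeing with X on the diagonal and on all positions (i, j) ∈ E. -/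
open Matrix

/-- A simple graph is chordal if every cycle of length at least 4 has a chord: an edge
of the graph joining two vertices of the cycle that is not an edge of the cycle. -/
def IsChordalGraph {V : Type*} (G : SimpleGraph V) : Prop :=
  ∀ (v : V) (w : G.Walk v v), w.IsCycle → 4 ≤ w.length →
    ∃ a b : V, a ∈ w.support ∧ b ∈ w.support ∧ G.Adj a b ∧ s(a, b) ∉ w.edges

section Aux
open SimpleGraph

variable {V : Type*} {G : SimpleGraph V}

lemma walk_length_one_mem_edges {u v : V} (w : G.Walk u v) (h : w.length = 1) :
    s(u, v) ∈ w.edges := by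
  cases w with
  | nil => simp at h
  | cons hadj w' =>
    cases w' with
    | nil => simp
    | cons h2 w2 => simp [SimpleGraph.Walk.length_cons] at h

lemma two_le_length_of_not_adj {u v : V} (w : G.Walk u v) (hne : u ≠ v) (hadj : ¬G.Adj u v) :
    2 ≤ w.length := by
  rcases Nat.lt_or_ge w.length 2 with h | h
  · interval_cases h' : w.length
    · exact absurd (SimpleGraph.Walk.eq_of_length_eq_zero h') hne
    · exact absurd (w.adj_of_mem_edges (walk_length_one_mem_edges w h')) hadj
  · exact h

lemma two_le_length_aux {u v : V} (w : G.Walk u v) (hne : u ≠ v)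
    (hedge : s(u, v) ∉ w.edges) : 2 ≤ w.length := by
  rcases Nat.lt_or_ge w.length 2 with h | h
  · interval_cases h' : w.length
    · exact absurd (SimpleGraph.Walk.eq_of_length_eq_zero h') hne
    · exact absurd (walk_length_one_mem_edges w h') hedge
  · exact h

/-- minimal-length walk within a vertex set is an induced path -/
lemma exists_min_path [DecidableEq V] {s : Set V} {x y : V} (hne : x ≠ y) (hadj : ¬G.Adj x y)
    (h : ∃ w : G.Walk x y, ∀ z ∈ w.support, z ∈ s) :
    ∃ m : G.Walk x y, m.IsPath ∧ (∀ z ∈ m.support, z ∈ s) ∧ 2 ≤ m.length ∧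
      ∀ u v, u ∈ m.support → v ∈ m.support → G.Adj u v → s(u, v) ∈ m.edges := by
  classical
  have hex : ∃ ℓ : ℕ, ∃ w : G.Walk x y, w.length = ℓ ∧ ∀ z ∈ w.support, z ∈ s := by
    obtain ⟨w, hw⟩ := h
    exact ⟨w.length, w, rfl, hw⟩
  set ℓ₀ := Nat.find hex with hℓ₀
  obtain ⟨w₀, hw₀len, hw₀s⟩ := Nat.find_spec hex
  refine ⟨w₀.bypass, w₀.bypass_isPath, ?_, ?_, ?_⟩
  · exact fun z hz => hw₀s z (w₀.support_bypass_subset hz)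
  · exact two_le_length_of_not_adj _ hne hadj
  · have hminlen : w₀.bypass.length = ℓ₀ := by
      have h1 : w₀.bypass.length ≤ ℓ₀ :=
        le_trans w₀.length_bypass_le (le_of_eq hw₀len)
      have h2 : ℓ₀ ≤ w₀.bypass.length :=
        Nat.find_min' hex ⟨w₀.bypass, rfl, fun z hz => hw₀s z (w₀.support_bypass_subset hz)⟩
      omega
    set m := w₀.bypass with hm
    have hms : ∀ z ∈ m.support, z ∈ s := fun z hz => hw₀s z (w₀.support_bypass_subset hz)
    intro u v hu hv huv
    by_contra hnotedge
    have hvtake : v ∈ (m.takeUntil u hu).support ∨ v ∈ (m.dropUntil u hu).support := by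
      have := m.take_spec hu
      rw [← this, SimpleGraph.Walk.mem_support_append_iff] at hv
      exact hv
    have hlen : m.length = (m.takeUntil u hu).length + (m.dropUntil u hu).length := by
      conv_lhs => rw [← m.take_spec hu]
      rw [SimpleGraph.Walk.length_append]
    -- in both cases build a strictly shorter walk within s, contradiction
    have key : ∀ q : G.Walk x y, (∀ z ∈ q.support, z ∈ s) → q.length < m.length → False := by
      intro q hqs hqlen
      have : ℓ₀ ≤ q.length := Nat.find_min' hex ⟨q, rfl, hqs⟩
      omega
    rcases hvtake with hv1 | hv2
    · -- v occurs in the first part : shortcut x → v → u → y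
      set p1 := m.takeUntil u hu with hp1
      set p2 := m.dropUntil u hu with hp2
      have hlen1 : p1.length = (p1.takeUntil v hv1).length + (p1.dropUntil v hv1).length := by
        conv_lhs => rw [← p1.take_spec hv1]
        rw [SimpleGraph.Walk.length_append]
      have hdvu : 2 ≤ (p1.dropUntil v hv1).length := by
        refine two_le_length_aux _ (G.ne_of_adj huv.symm) ?_
        intro hmem
        have : s(v, u) ∈ m.edges :=
          m.edges_takeUntil_subset hu (p1.edges_dropUntil_subset hv1 hmem)
        rw [Sym2.eq_swap] at this
        exact hnotedge this
      refine key ((p1.takeUntil v hv1).append (SimpleGraph.Walk.cons huv.symm p2)) ?_ ?_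
      · intro z hz
        rw [SimpleGraph.Walk.mem_support_append_iff] at hz
        rcases hz with hz | hz
        · exact hms z (m.support_takeUntil_subset hu (p1.support_takeUntil_subset hv1 hz))
        · rw [SimpleGraph.Walk.support_cons, List.mem_cons] at hz
          rcases hz with rfl | hz
          · exact hms z (m.support_takeUntil_subset hu hv1)
          · exact hms z (m.support_dropUntil_subset hu hz)
      · rw [SimpleGraph.Walk.length_append, SimpleGraph.Walk.length_cons]
        omega
    · -- v occurs in the second part : shortcut x → u → v → y
      set p1 := m.takeUntil u hu with hp1
      set p2 := m.dropUntil u hu with hp2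
      have hlen2 : p2.length = (p2.takeUntil v hv2).length + (p2.dropUntil v hv2).length := by
        conv_lhs => rw [← p2.take_spec hv2]
        rw [SimpleGraph.Walk.length_append]
      have hduv : 2 ≤ (p2.takeUntil v hv2).length := by
        refine two_le_length_aux _ (G.ne_of_adj huv) ?_
        intro hmem
        exact hnotedge
          (m.edges_dropUntil_subset hu (p2.edges_takeUntil_subset hv2 hmem))
      refine key (p1.append (SimpleGraph.Walk.cons huv (p2.dropUntil v hv2))) ?_ ?_
      · intro z hz
        rw [SimpleGraph.Walk.mem_support_append_iff] at hz
        rcases hz with hz | hz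
        · exact hms z (m.support_takeUntil_subset hu hz)
        · rw [SimpleGraph.Walk.support_cons, List.mem_cons] at hz
          rcases hz with rfl | hz
          · exact hms _ hu
          · exact hms z (m.support_dropUntil_subset hu (p2.support_dropUntil_subset hv2 hz))
      · rw [SimpleGraph.Walk.length_append, SimpleGraph.Walk.length_cons]
        omega

/-! ### Reachability within a vertex set -/

def ReachIn (G : SimpleGraph V) (s : Set V) (x y : V) : Prop :=
  ∃ w : G.Walk x y, ∀ z ∈ w.support, z ∈ s

namespace ReachIn

lemma refl {s : Set V} {x : V} (hx : x ∈ s) : ReachIn G s x x :=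
  ⟨SimpleGraph.Walk.nil, by simp [hx]⟩

lemma symm {s : Set V} {x y : V} (h : ReachIn G s x y) : ReachIn G s y x := by
  obtain ⟨w, hw⟩ := h
  exact ⟨w.reverse, fun z hz => hw z (by rwa [SimpleGraph.Walk.support_reverse,
    List.mem_reverse] at hz)⟩

lemma trans {s : Set V} {x y z : V} (h1 : ReachIn G s x y) (h2 : ReachIn G s y z) :
    ReachIn G s x z := by
  obtain ⟨w1, hw1⟩ := h1
  obtain ⟨w2, hw2⟩ := h2
  refine ⟨w1.append w2, fun u hu => ?_⟩
  rw [SimpleGraph.Walk.mem_support_append_iff] at hu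
  exact hu.elim (hw1 u) (hw2 u)

lemma adj {s : Set V} {x y z : V} (h : ReachIn G s x y) (hyz : G.Adj y z) (hz : z ∈ s) :
    ReachIn G s x z := by
  obtain ⟨w, hw⟩ := h
  refine ⟨w.concat hyz, fun u hu => ?_⟩
  rw [SimpleGraph.Walk.concat_eq_append, SimpleGraph.Walk.mem_support_append_iff] at hu
  rcases hu with hu | hu
  · exact hw u hu
  · rw [SimpleGraph.Walk.support_cons, List.mem_cons] at hu
    rcases hu with rfl | hu
    · exact hw u w.end_mem_support
    · simp only [SimpleGraph.Walk.support_nil, List.mem_singleton] at hu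
      subst hu; exact hz

lemma mem_end {s : Set V} {x y : V} (h : ReachIn G s x y) : y ∈ s := by
  obtain ⟨w, hw⟩ := h
  exact hw y w.end_mem_support

lemma of_support [DecidableEq V] {s : Set V} {x y : V} (w : G.Walk x y)
    (hw : ∀ z ∈ w.support, z ∈ s) {z : V} (hz : z ∈ w.support) : ReachIn G s x z :=
  ⟨w.takeUntil z hz, fun u hu => hw u (w.support_takeUntil_subset hz hu)⟩

end ReachIn

/-! ### Chordality and simpliciality relative to a vertex set -/

def ChordalOn (G : SimpleGraph V) (s : Finset V) : Prop :=
  ∀ (v : V) (w : G.Walk v v), w.IsCycle → 4 ≤ w.length → (∀ x ∈ w.support, x ∈ s) →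
    ∃ a b : V, a ∈ w.support ∧ b ∈ w.support ∧ G.Adj a b ∧ s(a, b) ∉ w.edges

def SimplicialOn (G : SimpleGraph V) (s : Finset V) (u : V) : Prop :=
  u ∈ s ∧ ∀ x ∈ s, ∀ y ∈ s, G.Adj u x → G.Adj u y → x ≠ y → G.Adj x y

lemma ChordalOn.mono {s t : Finset V} (hts : t ⊆ s) (h : ChordalOn G s) : ChordalOn G t :=
  fun v w hc hl hsup => h v w hc hl (fun x hx => hts (hsup x hx))


open SimpleGraph Walk in
lemma reach_extend {G : SimpleGraph V} {P : Set V} {t : V} :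
    ∀ {rt y : V} (w : G.Walk y rt), rt ∈ P → (∀ x, ReachIn G P rt x → ¬G.Adj x t) →
    (∀ z ∈ w.support, z ∈ P ∨ z = t) → ReachIn G P rt y := by
  intro rt y w
  induction w with
  | nil => exact fun h _ _ => ReachIn.refl h
  | cons hadjyc w'' ihw =>
    intro hrt hno hsup
    have hc := ihw hrt hno (fun z hz => hsup z
      (by rw [support_cons]; exact List.mem_cons_of_mem _ hz))
    rcases hsup _ (Walk.start_mem_support _) with hy | hy
    · exact hc.adj hadjyc.symm hy
    · subst hy
      exact absurd hadjyc.symm (hno _ hc)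

open SimpleGraph Walk in
theorem dirac_aux [DecidableEq V] (G : SimpleGraph V) :
    ∀ (n : ℕ) (s : Finset V), s.card = n → ChordalOn G s →
    ∀ a ∈ s, ∀ b ∈ s, a ≠ b → ¬G.Adj a b →
    ∃ u v : V, SimplicialOn G s u ∧ SimplicialOn G s v ∧ u ≠ v ∧ ¬G.Adj u v := by
  intro n
  induction n using Nat.strong_induction_on with
  | _ n ih =>
  intro s hcard hchord a ha b hb hab hnadj
  classical
  -- separators
  set D : Finset V → Set V := fun T => {z | z ∈ s ∧ z ∉ T} with hD
  set Sep : Finset V → Prop :=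
    fun T => T ⊆ s ∧ a ∉ T ∧ b ∉ T ∧ ¬ ReachIn G (D T) a b with hSep
  have hSepFull : Sep (s \ {a, b}) := by
    refine ⟨Finset.sdiff_subset, by simp, by simp [hab], ?_⟩
    rintro ⟨w, hw⟩
    have hmem : ∀ z ∈ w.support, z = a ∨ z = b := by
      intro z hz
      have := hw z hz
      simp only [hD, Set.mem_setOf_eq, Finset.mem_sdiff, not_and, not_not] at this
      have h2 := this.2 this.1
      simpa using h2
    cases w with
    | nil => exact hab rfl
    | cons hadj w' =>
      rcases hmem _ (by rw [support_cons]; exact List.mem_cons_of_mem _ w'.start_mem_support)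
        with h1 | h1
      · exact G.irrefl (h1 ▸ hadj)
      · exact hnadj (h1 ▸ hadj)
  have hex : ∃ k : ℕ, ∃ T : Finset V, Sep T ∧ T.card = k := ⟨_, _, hSepFull, rfl⟩
  obtain ⟨T, hT, hTcard⟩ := Nat.find_spec hex
  have hTmin : ∀ T' : Finset V, Sep T' → T.card ≤ T'.card := by
    intro T' h'
    rw [hTcard]
    exact Nat.find_min' hex ⟨T', h', rfl⟩
  obtain ⟨hTs, haT, hbT, hTreach⟩ := hT
  set R : V → V → Prop := ReachIn G (D T) with hR
  -- components
  have haD : a ∈ D T := ⟨ha, haT⟩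
  have hbD : b ∈ D T := ⟨hb, hbT⟩
  have hclose : ∀ r x y : V, R r x → G.Adj x y → y ∈ s → y ∉ T → R r y :=
    fun r x y hrx hxy hy hyT => hrx.adj hxy ⟨hy, hyT⟩
  have hDss : ∀ z, z ∈ D T → z ∈ s ∧ z ∉ T := fun z hz => hz
  -- claim 1 : every t ∈ T has a neighbor in each component
  have claim1 : ∀ t ∈ T, ∀ (r o : V) (w : G.Walk r o),
      (∀ z ∈ w.support, z ∈ s ∧ z ∉ T.erase t) → r ∈ s → r ∉ T → ¬ R r o →
      ∃ x, R r x ∧ G.Adj x t := by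
    intro t ht r o w hw hrs hrT hro
    by_contra hno
    push_neg at hno
    refine hro (reach_extend w.reverse ⟨hrs, hrT⟩ (fun x hx hxt => hno x hx hxt) ?_)
    intro z hz
    rw [support_reverse, List.mem_reverse] at hz
    have := hw z hz
    by_cases hzt : z = t
    · exact Or.inr hzt
    · exact Or.inl ⟨this.1, fun hzT => this.2 (Finset.mem_erase.mpr ⟨hzt, hzT⟩)⟩
  -- the walk witnessing non-separation of T.erase t
  have hwalk : ∀ t ∈ T, ∃ w : G.Walk a b, ∀ z ∈ w.support, z ∈ s ∧ z ∉ T.erase t := by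
    intro t ht
    have hnotsep : ¬ Sep (T.erase t) := by
      intro hsep
      have := hTmin _ hsep
      have h2 : (T.erase t).card < T.card := Finset.card_erase_lt_of_mem ht
      omega
    simp only [hSep, hD] at hnotsep
    push_neg at hnotsep
    obtain ⟨w, hw⟩ := hnotsep (fun z hz => hTs (Finset.mem_of_mem_erase hz))
      (fun haE => haT (Finset.mem_of_mem_erase haE))
      (fun hbE => hbT (Finset.mem_of_mem_erase hbE))
    exact ⟨w, fun z hz => hw z hz⟩
  have claim1A : ∀ t ∈ T, ∃ x, R a x ∧ G.Adj x t := by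
    intro t ht
    obtain ⟨w, hw⟩ := hwalk t ht
    exact claim1 t ht a b w hw ha haT hTreach
  have claim1B : ∀ t ∈ T, ∃ x, R b x ∧ G.Adj x t := by
    intro t ht
    obtain ⟨w, hw⟩ := hwalk t ht
    exact claim1 t ht b a w.reverse
      (by intro z hz; rw [support_reverse, List.mem_reverse] at hz; exact hw z hz)
      hb hbT (fun hba => hTreach hba.symm)
  have hABdisj : ∀ z, R a z → R b z → False := fun z h1 h2 => hTreach (h1.trans h2.symm)
  have hRmem : ∀ r z, R r z → z ∈ s ∧ z ∉ T := fun r z h => h.mem_end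
  have hmixed : ∀ u v, R a u → R b v → G.Adj u v → False := fun u v hau hbv hadj =>
    hABdisj v (hclose a u v hau hadj (hRmem b v hbv).1 (hRmem b v hbv).2) hbv
  have hcomp_walk : ∀ (r x y : V), R r x → R r y →
      ∃ w : G.Walk x y, ∀ z ∈ w.support, R r z := by
    rintro r x y ⟨w1, hw1⟩ ⟨w2, hw2⟩
    refine ⟨w1.reverse.append w2, ?_⟩
    intro z hz
    rw [mem_support_append_iff] at hz
    rcases hz with hz | hz
    · rw [support_reverse, List.mem_reverse] at hz
      exact ReachIn.of_support w1 hw1 hz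
    · exact ReachIn.of_support w2 hw2 hz
  have claim2 : ∀ t₁ ∈ T, ∀ t₂ ∈ T, t₁ ≠ t₂ → G.Adj t₁ t₂ := by
    intro t₁ ht₁ t₂ ht₂ hne12
    by_contra hn12
    have hRT : ∀ (r z : V), z ∈ T → ¬ R r z := fun r z hz h => (hRmem r z h).2 hz
    obtain ⟨x₁, hx₁R, hx₁adj⟩ := claim1A t₁ ht₁
    obtain ⟨y₁, hy₁R, hy₁adj⟩ := claim1A t₂ ht₂
    obtain ⟨x₂, hx₂R, hx₂adj⟩ := claim1B t₁ ht₁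
    obtain ⟨y₂, hy₂R, hy₂adj⟩ := claim1B t₂ ht₂
    have hwA : ∃ w : G.Walk t₁ t₂, ∀ z ∈ w.support,
        z ∈ {z : V | R a z ∨ z = t₁ ∨ z = t₂} := by
      obtain ⟨q, hq⟩ := hcomp_walk a x₁ y₁ hx₁R hy₁R
      refine ⟨Walk.cons hx₁adj.symm (q.concat hy₁adj), ?_⟩
      intro z hz
      rw [support_cons, List.mem_cons] at hz
      rcases hz with rfl | hz
      · exact Or.inr (Or.inl rfl)
      · rw [concat_eq_append, mem_support_append_iff] at hz
        rcases hz with hz | hz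
        · exact Or.inl (hq z hz)
        · rw [support_cons, List.mem_cons] at hz
          rcases hz with rfl | hz
          · exact Or.inl (hq _ q.end_mem_support)
          · simp only [support_nil, List.mem_singleton] at hz
            exact Or.inr (Or.inr hz)
    have hwB : ∃ w : G.Walk t₁ t₂, ∀ z ∈ w.support,
        z ∈ {z : V | R b z ∨ z = t₁ ∨ z = t₂} := by
      obtain ⟨q, hq⟩ := hcomp_walk b x₂ y₂ hx₂R hy₂R
      refine ⟨Walk.cons hx₂adj.symm (q.concat hy₂adj), ?_⟩
      intro z hz
      rw [support_cons, List.mem_cons] at hz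
      rcases hz with rfl | hz
      · exact Or.inr (Or.inl rfl)
      · rw [concat_eq_append, mem_support_append_iff] at hz
        rcases hz with hz | hz
        · exact Or.inl (hq z hz)
        · rw [support_cons, List.mem_cons] at hz
          rcases hz with rfl | hz
          · exact Or.inl (hq _ q.end_mem_support)
          · simp only [support_nil, List.mem_singleton] at hz
            exact Or.inr (Or.inr hz)
    obtain ⟨m₁, hm₁path, hm₁s, hm₁len, hm₁chord⟩ := exists_min_path hne12 hn12 hwA
    obtain ⟨m₂, hm₂path, hm₂s, hm₂len, hm₂chord⟩ := exists_min_path hne12 hn12 hwB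
    have hm₁mem : ∀ z ∈ m₁.support, R a z ∨ z = t₁ ∨ z = t₂ := fun z hz => hm₁s z hz
    have hm₂mem : ∀ z ∈ m₂.support, R b z ∨ z = t₁ ∨ z = t₂ := fun z hz => hm₂s z hz
    -- the cycle
    set c : G.Walk t₁ t₁ := m₁.append m₂.reverse with hc
    have hcsupmem : ∀ z ∈ c.support, z ∈ m₁.support ∨ z ∈ m₂.support := by
      intro z hz
      rw [hc, mem_support_append_iff] at hz
      rcases hz with hz | hz
      · exact Or.inl hz
      · rw [support_reverse, List.mem_reverse] at hz
        exact Or.inr hz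
    have ht₁nin : t₁ ∉ m₁.support.tail := by
      have hnd := hm₁path.support_nodup
      rw [support_eq_cons] at hnd
      exact (List.nodup_cons.mp hnd).1
    have ht₂nin : t₂ ∉ m₂.reverse.support.tail := by
      have hnd := hm₂path.reverse.support_nodup
      rw [support_eq_cons] at hnd
      exact (List.nodup_cons.mp hnd).1
    have htail1 : ∀ z ∈ m₁.support.tail, (R a z ∨ z = t₂) ∧ z ≠ t₁ := by
      intro z hz
      have hzsup : z ∈ m₁.support := List.mem_of_mem_tail hz
      have hzne : z ≠ t₁ := fun h => ht₁nin (h ▸ hz)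
      rcases hm₁mem z hzsup with h | h | h
      · exact ⟨Or.inl h, hzne⟩
      · exact absurd h hzne
      · exact ⟨Or.inr h, hzne⟩
    have htail2 : ∀ z ∈ m₂.reverse.support.tail, (R b z ∨ z = t₁) ∧ z ≠ t₂ := by
      intro z hz
      have hzsup : z ∈ m₂.support := by
        have := List.mem_of_mem_tail hz
        rwa [support_reverse, List.mem_reverse] at this
      have hzne : z ≠ t₂ := fun h => ht₂nin (h ▸ hz)
      rcases hm₂mem z hzsup with h | h | h
      · exact ⟨Or.inl h, hzne⟩
      · exact ⟨Or.inr h, hzne⟩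
      · exact absurd h hzne
    have hcycle : c.IsCycle := by
      refine ⟨⟨⟨?_⟩, ?_⟩, ?_⟩
      · -- edges nodup
        rw [hc, edges_append, edges_reverse]
        refine List.Nodup.append hm₁path.edges_nodup
          (List.nodup_reverse.mpr hm₂path.edges_nodup) ?_
        intro e he1 he2
        rw [List.mem_reverse] at he2
        induction e with
        | h x y =>
          have hx1 : x ∈ m₁.support := m₁.fst_mem_support_of_mem_edges he1
          have hy1 : y ∈ m₁.support := m₁.snd_mem_support_of_mem_edges he1
          have hx2 : x ∈ m₂.support := m₂.fst_mem_support_of_mem_edges he2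
          have hy2 : y ∈ m₂.support := m₂.snd_mem_support_of_mem_edges he2
          have hadjxy : G.Adj x y := m₁.adj_of_mem_edges he1
          have hxT : x = t₁ ∨ x = t₂ := by
            rcases hm₁mem x hx1 with h | h | h
            · rcases hm₂mem x hx2 with h' | h' | h'
              · exact absurd h' (fun hh => hABdisj x h hh)
              · exact Or.inl h'
              · exact Or.inr h'
            · exact Or.inl h
            · exact Or.inr h
          have hyT : y = t₁ ∨ y = t₂ := by
            rcases hm₁mem y hy1 with h | h | h
            · rcases hm₂mem y hy2 with h' | h' | h'
              · exact absurd h' (fun hh => hABdisj y h hh)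
              · exact Or.inl h'
              · exact Or.inr h'
            · exact Or.inl h
            · exact Or.inr h
          rcases hxT with rfl | rfl <;> rcases hyT with rfl | rfl
          · exact G.irrefl hadjxy
          · exact hn12 hadjxy
          · exact hn12 hadjxy.symm
          · exact G.irrefl hadjxy
      · -- ne nil
        intro hnil
        have : c.length = 0 := by rw [hnil]; rfl
        rw [hc, length_append, length_reverse] at this
        omega
      · -- support tail nodup
        rw [hc, tail_support_append]
        refine List.Nodup.append ?_ ?_ ?_
        · have hnd := hm₁path.support_nodup
          rw [support_eq_cons] at hnd
          exact (List.nodup_cons.mp hnd).2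
        · have hnd := hm₂path.reverse.support_nodup
          rw [support_eq_cons] at hnd
          exact (List.nodup_cons.mp hnd).2
        · intro z hz1 hz2
          obtain ⟨hz1', hz1ne⟩ := htail1 z hz1
          obtain ⟨hz2', hz2ne⟩ := htail2 z hz2
          rcases hz1' with h | h
          · rcases hz2' with h' | h'
            · exact hABdisj z h h'
            · exact hz1ne h'
          · exact hz2ne h
    have hclen : 4 ≤ c.length := by
      rw [hc, length_append, length_reverse]
      omega
    have hcsup : ∀ z ∈ c.support, z ∈ s := by
      intro z hz
      rcases hcsupmem z hz with hz' | hz'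
      · rcases hm₁mem z hz' with h | rfl | rfl
        · exact (hRmem a z h).1
        · exact hTs ht₁
        · exact hTs ht₂
      · rcases hm₂mem z hz' with h | rfl | rfl
        · exact (hRmem b z h).1
        · exact hTs ht₁
        · exact hTs ht₂
    obtain ⟨u, v, hu, hv, huvadj, huvne⟩ := hchord t₁ c hcycle hclen hcsup
    -- the chord must be an edge of the cycle : contradiction in all cases
    have hcase1 : u ∈ m₁.support → v ∈ m₁.support → False := by
      intro h1 h2
      refine huvne ?_
      rw [hc, edges_append, List.mem_append]
      exact Or.inl (hm₁chord u v h1 h2 huvadj)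
    have hcase2 : u ∈ m₂.support → v ∈ m₂.support → False := by
      intro h1 h2
      refine huvne ?_
      rw [hc, edges_append, List.mem_append, edges_reverse, List.mem_reverse]
      exact Or.inr (hm₂chord u v h1 h2 huvadj)
    have honly : ∀ z, z ∈ c.support → z ∉ m₁.support → R b z := by
      intro z hz hz1
      rcases hcsupmem z hz with h | h
      · exact absurd h hz1
      · rcases hm₂mem z h with h' | rfl | rfl
        · exact h'
        · exact absurd m₁.start_mem_support hz1
        · exact absurd m₁.end_mem_support hz1
    have honly2 : ∀ z, z ∈ c.support → z ∉ m₂.support → R a z := by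
      intro z hz hz1
      rcases hcsupmem z hz with h | h
      · rcases hm₁mem z h with h' | rfl | rfl
        · exact h'
        · exact absurd m₂.start_mem_support hz1
        · exact absurd m₂.end_mem_support hz1
      · exact absurd h hz1
    by_cases hu1 : u ∈ m₁.support
    · by_cases hv1 : v ∈ m₁.support
      · exact hcase1 hu1 hv1
      · by_cases hu2 : u ∈ m₂.support
        · rcases hcsupmem v hv with h | h
          · exact hv1 h
          · exact hcase2 hu2 h
        · exact hmixed u v (honly2 u hu hu2) (honly v hv hv1) huvadj
    · by_cases hv2 : v ∈ m₂.support
      · rcases hcsupmem u hu with h | h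
        · exact hu1 h
        · exact hcase2 h hv2
      · exact hmixed v u (honly2 v hv hv2) (honly u hu hu1) huvadj.symm
  -- extracting a simplicial vertex from one side
  have side : ∀ (r o : V), r ∈ s → r ∉ T → o ∈ s → o ∉ T → ¬ R r o →
      ∃ u, R r u ∧ SimplicialOn G s u := by
    intro r o hrs hrT hos hoT hro
    set Ar : Finset V := s.filter (fun z => R r z) with hAr
    set s' : Finset V := Ar ∪ T with hs'
    have hsub : s' ⊆ s := by
      intro z hz
      rw [hs', Finset.mem_union] at hz
      rcases hz with hz | hz
      · exact (Finset.mem_filter.mp hz).1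
      · exact hTs hz
    have hrR : R r r := ReachIn.refl ⟨hrs, hrT⟩
    have hos' : o ∉ s' := by
      rw [hs', Finset.mem_union]
      rintro (h | h)
      · exact hro (Finset.mem_filter.mp h).2
      · exact hoT h
    have hcardlt : s'.card < s.card :=
      Finset.card_lt_card ((Finset.ssubset_iff_of_subset hsub).mpr ⟨o, hos, hos'⟩)
    have hchord' : ChordalOn G s' := ChordalOn.mono hsub hchord
    have hnbr : ∀ u, R r u → ∀ x, x ∈ s → G.Adj u x → x ∈ s' := by
      intro u hu x hx hadj
      rw [hs', Finset.mem_union]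
      by_cases hxT : x ∈ T
      · exact Or.inr hxT
      · exact Or.inl (Finset.mem_filter.mpr ⟨hx, hclose r u x hu hadj hx hxT⟩)
    have hlift : ∀ u, R r u → SimplicialOn G s' u → SimplicialOn G s u := by
      intro u hu hsimp
      refine ⟨(hRmem r u hu).1, ?_⟩
      intro x hx y hy hux huy hxy
      exact hsimp.2 x (hnbr u hu x hx hux) y (hnbr u hu y hy huy) hux huy hxy
    by_cases hcomp : ∀ x ∈ s', ∀ y ∈ s', x ≠ y → G.Adj x y
    · refine ⟨r, hrR, hrs, ?_⟩
      intro x hx y hy hrx hry hxy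
      exact hcomp x (hnbr r hrR x hx hrx) y (hnbr r hrR y hy hry) hxy
    · push_neg at hcomp
      obtain ⟨x, hx, y, hy, hxyne, hxynadj⟩ := hcomp
      obtain ⟨u, v, husimp, hvsimp, huvne, huvnadj⟩ :=
        ih s'.card (by omega) s' rfl hchord' x hx y hy hxyne hxynadj
      have hmemT : ∀ z, z ∈ s' → ¬ R r z → z ∈ T := by
        intro z hz hzR
        rw [hs', Finset.mem_union] at hz
        rcases hz with h | h
        · exact absurd (Finset.mem_filter.mp h).2 hzR
        · exact h
      have huv : R r u ∨ R r v := by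
        by_contra hcon
        push_neg at hcon
        exact huvnadj (claim2 u (hmemT u husimp.1 hcon.1) v (hmemT v hvsimp.1 hcon.2) huvne)
      rcases huv with h | h
      · exact ⟨u, h, hlift u h husimp⟩
      · exact ⟨v, h, hlift v h hvsimp⟩
  obtain ⟨u, huR, husimp⟩ := side a b ha haT hb hbT hTreach
  obtain ⟨v, hvR, hvsimp⟩ := side b a hb hbT ha haT (fun h => hTreach h.symm)
  refine ⟨u, v, husimp, hvsimp, ?_, ?_⟩
  · intro h; exact hABdisj u huR (h ▸ hvR)
  · intro hadj; exact hmixed u v huR hvR hadj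

section MatrixPart
open Matrix
variable {V : Type*} [Fintype V] [DecidableEq V]

lemma psd_extend (v : V) (X : Matrix V V ℝ) (hXsymm : X.IsSymm)
    (S : Finset V) (hvS : v ∉ S)
    (hC : (X.submatrix (fun i : ↥(insert v S) => (i : V))
      (fun i : ↥(insert v S) => (i : V))).PosSemidef)
    (Z : Matrix {u : V // u ≠ v} {u : V // u ≠ v} ℝ) (hZ : Z.PosSemidef)
    (hZX : ∀ (x y : {u : V // u ≠ v}), (x : V) ∈ S → (y : V) ∈ S → Z x y = X x y) :
    ∃ Y : Matrix V V ℝ, Y.PosSemidef ∧ Y v v = X v v ∧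
      (∀ u : {u : V // u ≠ v}, (u : V) ∈ S → Y v u = X v u ∧ Y u v = X v u) ∧
      (∀ u w : {u : V // u ≠ v}, Y u w = Z u w) := by
  classical
  set C : Finset V := insert v S with hCdef
  have hvC : v ∈ C := Finset.mem_insert_self v S
  obtain ⟨K, hK⟩ : ∃ K, _ = Kᴴ * K := by
    open scoped MatrixOrder in
    exact CStarAlgebra.nonneg_iff_eq_star_mul_self.mp hC.nonneg
  obtain ⟨L, hL⟩ : ∃ L, Z = Lᴴ * L := by
    open scoped MatrixOrder in
    exact CStarAlgebra.nonneg_iff_eq_star_mul_self.mp hZ.nonneg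
  -- Gram vectors for X on the clique C
  set k : ↥C → EuclideanSpace ℝ ↥C :=
    fun x => (WithLp.equiv 2 (↥C → ℝ)).symm (fun i => K i x) with hkdef
  have hk : ∀ x y : ↥C, (inner ℝ (k x) (k y) : ℝ) = X x y := by
    intro x y
    have h1 : X.submatrix (fun i : ↥C => (i : V)) (fun i : ↥C => (i : V)) x y
        = (Kᴴ * K) x y := by rw [hK]
    rw [Matrix.submatrix_apply] at h1
    rw [h1, Matrix.mul_apply]
    simp [PiLp.inner_apply, RCLike.inner_apply, Matrix.conjTranspose_apply, hkdef, mul_comm]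
  -- Gram vectors for Z
  have hlZ : ∀ x y : {u : V // u ≠ v}, ∑ j, L j x * L j y = Z x y := by
    intro x y
    rw [hL, Matrix.mul_apply]
    simp [Matrix.conjTranspose_apply]
  -- the projection
  set ι' : ↥S → ↥C := fun u => ⟨u.1, Finset.mem_insert_of_mem u.2⟩ with hι'
  set R : Submodule ℝ (EuclideanSpace ℝ ↥C) :=
    Submodule.span ℝ (Set.range (fun u : ↥S => k (ι' u))) with hR
  set z : EuclideanSpace ℝ ↥C := k ⟨v, hvC⟩ with hz
  set p : EuclideanSpace ℝ ↥C := (R.orthogonalProjection z : EuclideanSpace ℝ ↥C) with hp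
  have hpmem : p ∈ R := SetLike.coe_mem _
  have hporth : ∀ x ∈ R, (inner ℝ (z - p) x : ℝ) = 0 := fun x hx =>
    R.starProjection_inner_eq_zero z x hx
  obtain ⟨w, hw⟩ := (Submodule.mem_span_range_iff_exists_fun ℝ).mp hpmem
  -- inner products with p
  have hinnerp : ∀ u₀ : ↥S, (inner ℝ (k (ι' u₀)) p : ℝ) = ∑ u : ↥S, w u * X u₀ u := by
    intro u₀
    rw [← hw, inner_sum]
    congr 1
    ext u
    rw [real_inner_smul_right, hk]
  have hinnerz : ∀ u₀ : ↥S, (inner ℝ (k (ι' u₀)) p : ℝ) = X u₀ v := by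
    intro u₀
    have h0 : (inner ℝ (z - p) (k (ι' u₀)) : ℝ) = 0 :=
      hporth _ (Submodule.subset_span (Set.mem_range_self u₀))
    rw [inner_sub_left] at h0
    have h2 : (inner ℝ z (k (ι' u₀)) : ℝ) = inner ℝ p (k (ι' u₀)) := sub_eq_zero.mp h0
    calc (inner ℝ (k (ι' u₀)) p : ℝ) = inner ℝ p (k (ι' u₀)) := real_inner_comm _ _
      _ = inner ℝ z (k (ι' u₀)) := h2.symm
      _ = inner ℝ (k (ι' u₀)) z := real_inner_comm _ _
      _ = X u₀ v := hk _ _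
  have hpp : (inner ℝ p p : ℝ) = ∑ u : ↥S, ∑ u' : ↥S, w u * w u' * X u u' := by
    conv_lhs => rw [← hw]
    rw [sum_inner]
    congr 1
    ext u
    rw [real_inner_smul_left, inner_sum, Finset.mul_sum]
    congr 1
    ext u'
    rw [real_inner_smul_right, hk]
    ring
  have hple : (inner ℝ p p : ℝ) ≤ X v v := by
    have hzz : (inner ℝ z z : ℝ) = X v v := hk _ _
    have h0 : (inner ℝ (z - p) p : ℝ) = 0 := hporth p hpmem
    have hdecomp := real_inner_add_add_self (z - p) p
    rw [sub_add_cancel, h0] at hdecomp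
    have hnn : (0:ℝ) ≤ inner ℝ (z - p) (z - p) := real_inner_self_nonneg
    rw [← hzz]
    linarith
  -- transfer the coefficients to V'
  have heS : ∀ u : ↥S, (u : V) ≠ v := fun u h => hvS (h ▸ u.2)
  set e : ↥S → {u : V // u ≠ v} := fun u => ⟨u.1, heS u⟩ with he
  set w' : {u : V // u ≠ v} → ℝ := fun x => ∑ u : ↥S, if x = e u then w u else 0 with hw'
  have hsum : ∀ f : {u : V // u ≠ v} → ℝ,
      ∑ x : {u : V // u ≠ v}, f x * w' x = ∑ u : ↥S, f (e u) * w u := by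
    intro f
    simp_rw [hw', Finset.mul_sum, mul_ite, mul_zero]
    rw [Finset.sum_comm]
    refine Finset.sum_congr rfl (fun u _ => ?_)
    rw [Finset.sum_ite_eq' Finset.univ (e u) (fun x => f x * w u)]
    simp
  set q : {u : V // u ≠ v} → ℝ := L *ᵥ w' with hq
  have hZw : ∀ x : {u : V // u ≠ v}, (Z *ᵥ w') x = ∑ u : ↥S, Z x (e u) * w u := by
    intro x
    rw [Matrix.mulVec]
    exact hsum (fun y => Z x y)
  have hXvsymm : ∀ i j : V, X i j = X j i := by
    intro i j
    conv_lhs => rw [← hXsymm]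
    rw [Matrix.transpose_apply]
  have keyA : ∀ u₀ : ↥S, (Z *ᵥ w') (e u₀) = X v u₀ := by
    intro u₀
    rw [hZw]
    have h3 : ∀ u : ↥S, Z (e u₀) (e u) * w u = w u * X u₀ u := by
      intro u
      rw [hZX (e u₀) (e u) u₀.2 u.2]
      ring
    rw [Finset.sum_congr rfl (fun u _ => h3 u), ← hinnerp, hinnerz]
    exact hXvsymm u₀ v
  have hZsymm : ∀ x y : {u : V // u ≠ v}, Z x y = Z y x := fun x y => by
    rw [← hlZ, ← hlZ]
    exact Finset.sum_congr rfl fun j _ => mul_comm _ _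
  have hqL : ∀ x : {u : V // u ≠ v}, ∑ j, q j * L j x = (Z *ᵥ w') x := by
    intro x
    have h1 : ∀ j, q j * L j x = ∑ y, L j y * w' y * L j x := by
      intro j
      rw [hq, Matrix.mulVec, dotProduct, Finset.sum_mul]
    rw [Finset.sum_congr rfl fun j _ => h1 j, Finset.sum_comm, Matrix.mulVec, dotProduct]
    refine Finset.sum_congr rfl fun y _ => ?_
    calc ∑ j, L j y * w' y * L j x = (∑ j, L j y * L j x) * w' y := by
          rw [Finset.sum_mul]
          exact Finset.sum_congr rfl fun j _ => by ring
      _ = Z y x * w' y := by rw [hlZ]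
      _ = Z x y * w' y := by rw [hZsymm]
  have hqq : (∑ j, q j * q j) = (inner ℝ p p : ℝ) := by
    have h1 : (∑ j, q j * q j) = ∑ y, (Z *ᵥ w') y * w' y := by
      calc ∑ j, q j * q j = ∑ j, q j * ∑ y, L j y * w' y := by
            refine Finset.sum_congr rfl fun j _ => ?_
            rw [hq]
            rfl
        _ = ∑ j, ∑ y, q j * (L j y * w' y) := by
            refine Finset.sum_congr rfl fun j _ => Finset.mul_sum _ _ _
        _ = ∑ y, ∑ j, q j * (L j y * w' y) := Finset.sum_comm
        _ = ∑ y, (∑ j, q j * L j y) * w' y := by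
            refine Finset.sum_congr rfl fun y _ => ?_
            rw [Finset.sum_mul]
            exact Finset.sum_congr rfl fun j _ => by ring
        _ = ∑ y, (Z *ᵥ w') y * w' y := by
            refine Finset.sum_congr rfl fun y _ => by rw [hqL]
    rw [h1, hsum (fun y => (Z *ᵥ w') y), hpp]
    refine Finset.sum_congr rfl fun u _ => ?_
    rw [hZw, Finset.sum_mul]
    refine Finset.sum_congr rfl fun u' _ => ?_
    rw [hZX (e u) (e u') u.2 u'.2]
    ring
  have hqle : (∑ j, q j * q j) ≤ X v v := by rw [hqq]; exact hple
  -- the Gram matrix completion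
  set α : ℝ := Real.sqrt (X v v - ∑ j, q j * q j) with hα
  have hαsq : α * α = X v v - ∑ j, q j * q j := Real.mul_self_sqrt (by linarith)
  set A : Matrix (Unit ⊕ {u : V // u ≠ v}) V ℝ := fun r i =>
    if h : i = v then Sum.elim (fun _ => α) q r
    else Sum.elim (fun _ => (0:ℝ)) (fun j => L j ⟨i, h⟩) r with hA
  have hAv : ∀ r, A r v = Sum.elim (fun _ => α) q r := by
    intro r
    rw [hA]
    simp
  have hAu : ∀ (r) (x : {u : V // u ≠ v}),
      A r (x : V) = Sum.elim (fun _ => (0:ℝ)) (fun j => L j x) r := by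
    intro r x
    rw [hA]
    simp only
    rw [dif_neg x.2]
  have happly : ∀ i j : V, (Aᴴ * A) i j =
      A (Sum.inl ()) i * A (Sum.inl ()) j +
      ∑ x : {u : V // u ≠ v}, A (Sum.inr x) i * A (Sum.inr x) j := by
    intro i j
    rw [Matrix.mul_apply, Fintype.sum_sum_type]
    simp [Matrix.conjTranspose_apply]
  refine ⟨Aᴴ * A, Matrix.posSemidef_conjTranspose_mul_self A, ?_, ?_, ?_⟩
  · rw [happly]
    simp only [hAv, Sum.elim_inl, Sum.elim_inr]
    linarith [hαsq]
  · intro u hu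
    have hYvu : (Aᴴ * A) v (u : V) = X v u := by
      rw [happly]
      simp only [hAv, hAu, Sum.elim_inl, Sum.elim_inr, mul_zero, zero_add]
      rw [hqL]
      have hue : e ⟨(u : V), hu⟩ = u := Subtype.ext rfl
      rw [← hue]
      exact keyA ⟨(u : V), hu⟩
    have hYuv : (Aᴴ * A) (u : V) v = (Aᴴ * A) v (u : V) := by
      rw [happly, happly]
      simp only [hAv, hAu, Sum.elim_inl, Sum.elim_inr, mul_zero, zero_mul, zero_add]
      exact Finset.sum_congr rfl fun x _ => mul_comm _ _
    exact ⟨hYvu, hYuv.trans hYvu⟩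
  · intro u x
    rw [happly]
    simp only [hAv, hAu, Sum.elim_inl, Sum.elim_inr, mul_zero, zero_mul, zero_add]
    exact hlZ u x

end MatrixPart

theorem exists_simplicialOn [DecidableEq V] (G : SimpleGraph V) (s : Finset V)
    (hchord : ChordalOn G s) (hne : s.Nonempty) : ∃ u, SimplicialOn G s u := by
  by_cases hcomp : ∀ x ∈ s, ∀ y ∈ s, x ≠ y → G.Adj x y
  · obtain ⟨u, hu⟩ := hne
    exact ⟨u, hu, fun x hx y hy _ _ hxy => hcomp x hx y hy hxy⟩
  · push_neg at hcomp
    obtain ⟨x, hx, y, hy, hxyne, hxynadj⟩ := hcomp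
    obtain ⟨u, _, hu, _⟩ := dirac_aux G s.card s rfl hchord x hx y hy hxyne hxynadj
    exact ⟨u, hu⟩

open Matrix in
theorem completion_aux : ∀ (n : ℕ) {V : Type} [Fintype V] [DecidableEq V],
    Fintype.card V = n → ∀ (G : SimpleGraph V), ChordalOn G Finset.univ →
    ∀ (X : Matrix V V ℝ), X.IsSymm →
    (∀ C : Finset V, G.IsClique (C : Set V) →
      (X.submatrix (fun i : ↥C => (i : V)) (fun i : ↥C => (i : V))).PosSemidef) →
    ∃ Y : Matrix V V ℝ, Y.PosSemidef ∧ (∀ i, Y i i = X i i) ∧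
      ∀ i j, G.Adj i j → Y i j = X i j := by
  intro n
  induction n with
  | zero =>
    intro V _ _ hcard G hG X hXsymm hclq
    have : IsEmpty V := Fintype.card_eq_zero_iff.mp hcard
    exact ⟨0, Matrix.PosSemidef.zero, fun i => isEmptyElim i, fun i j _ => isEmptyElim i⟩
  | succ n ihn =>
    intro V _ _ hcard G hG X hXsymm hclq
    classical
    have hVne : Nonempty V := Fintype.card_pos_iff.mp (by omega)
    obtain ⟨v, _, hsimp⟩ := exists_simplicialOn G Finset.univ hG Finset.univ_nonempty
    have hXvsymm : ∀ i j : V, X i j = X j i := by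
      intro i j
      conv_lhs => rw [← hXsymm]
      rw [Matrix.transpose_apply]
    -- the induced graph on the complement of v
    set G' : SimpleGraph {u : V // u ≠ v} := SimpleGraph.comap Subtype.val G with hG'def
    have hG'adj : ∀ x y : {u : V // u ≠ v}, G'.Adj x y ↔ G.Adj x y := fun x y => Iff.rfl
    have hcard' : Fintype.card {u : V // u ≠ v} = n := by
      have h1 := Fintype.card_subtype_compl (fun u : V => u = v)
      have h2 : Fintype.card {u : V // u = v} = 1 := Fintype.card_subtype_eq v
      have h3 : Fintype.card {u : V // ¬ u = v} = Fintype.card {u : V // u ≠ v} := rfl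
      omega
    have hG'chordal : ChordalOn G' Finset.univ := by
      intro x w hcyc hlen _
      have hmap : (w.map (SimpleGraph.Hom.comap Subtype.val G)).IsCycle :=
        hcyc.map Subtype.val_injective
      have hlen' : 4 ≤ (w.map (SimpleGraph.Hom.comap Subtype.val G)).length := by
        rwa [SimpleGraph.Walk.length_map]
      obtain ⟨a, b, ha, hb, hab, hnab⟩ := hG _ _ hmap hlen' (fun z _ => Finset.mem_univ z)
      rw [SimpleGraph.Walk.support_map, List.mem_map] at ha hb
      obtain ⟨a', ha', rfl⟩ := ha
      obtain ⟨b', hb', rfl⟩ := hb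
      refine ⟨a', b', ha', hb', hab, fun hmem => hnab ?_⟩
      rw [SimpleGraph.Walk.edges_map, List.mem_map]
      exact ⟨s(a', b'), hmem, rfl⟩
    set X' : Matrix {u : V // u ≠ v} {u : V // u ≠ v} ℝ :=
      X.submatrix Subtype.val Subtype.val with hX'def
    have hX'symm : X'.IsSymm := by
      rw [hX'def, Matrix.IsSymm, Matrix.transpose_submatrix, hXsymm.eq]
    have hclq' : ∀ C' : Finset {u : V // u ≠ v}, G'.IsClique (C' : Set {u : V // u ≠ v}) →
        (X'.submatrix (fun i : ↥C' => (i : {u : V // u ≠ v}))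
          (fun i : ↥C' => (i : {u : V // u ≠ v}))).PosSemidef := by
      intro C' hC'
      set C : Finset V := C'.map ⟨Subtype.val, Subtype.val_injective⟩ with hCdef
      have hmemC : ∀ x : ↥C', (x : {u : V // u ≠ v}).1 ∈ C := by
        intro x
        rw [hCdef, Finset.mem_map]
        exact ⟨x, x.2, rfl⟩
      have hCclq : G.IsClique (C : Set V) := by
        intro x hx y hy hne
        rw [Finset.mem_coe, hCdef, Finset.mem_map] at hx hy
        obtain ⟨x', hx', rfl⟩ := hx
        obtain ⟨y', hy', rfl⟩ := hy
        exact hC' hx' hy' (fun h => hne (congrArg _ h))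
      have hpsd := (hclq C hCclq).submatrix
        (fun i : ↥C' => (⟨(i : {u : V // u ≠ v}).1, hmemC i⟩ : ↥C))
      rw [Matrix.submatrix_submatrix] at hpsd
      exact hpsd
    obtain ⟨Z, hZpsd, hZdiag, hZedges⟩ := ihn hcard' G' hG'chordal X' hX'symm hclq'
    -- the neighborhood of v is a clique
    set S : Finset V := Finset.univ.filter (fun u => G.Adj v u) with hSdef
    have hmemS : ∀ u, u ∈ S ↔ G.Adj v u := by
      intro u
      rw [hSdef, Finset.mem_filter]
      simp
    have hvS : v ∉ S := fun h => G.irrefl ((hmemS v).mp h)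
    have hCins : G.IsClique ((insert v S : Finset V) : Set V) := by
      intro x hx y hy hne
      rw [Finset.coe_insert, Set.mem_insert_iff, Finset.mem_coe] at hx hy
      rcases hx with rfl | hx
      · rcases hy with rfl | hy
        · exact absurd rfl hne
        · exact (hmemS y).mp hy
      · rcases hy with rfl | hy
        · exact ((hmemS x).mp hx).symm
        · exact hsimp x (Finset.mem_univ x) y (Finset.mem_univ y)
            ((hmemS x).mp hx) ((hmemS y).mp hy) hne
    have hZX : ∀ (x y : {u : V // u ≠ v}), (x : V) ∈ S → (y : V) ∈ S → Z x y = X x y := by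
      intro x y hx hy
      by_cases hxy : x = y
      · subst hxy
        exact hZdiag x
      · have : G'.Adj x y := hsimp x (Finset.mem_univ _) y (Finset.mem_univ _)
          ((hmemS x).mp hx) ((hmemS y).mp hy) (fun h => hxy (Subtype.ext h))
        exact hZedges x y this
    obtain ⟨Y, hYpsd, hYvv, hYvS, hYZ⟩ :=
      psd_extend v X hXsymm S hvS (hclq _ hCins) Z hZpsd hZX
    refine ⟨Y, hYpsd, ?_, ?_⟩
    · intro i
      by_cases hiv : i = v
      · subst hiv; exact hYvv
      · rw [hYZ ⟨i, hiv⟩ ⟨i, hiv⟩]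
        exact hZdiag ⟨i, hiv⟩
    · intro i j hadj
      by_cases hiv : i = v
      · subst hiv
        exact (hYvS ⟨j, hadj.ne'⟩ ((hmemS j).mpr hadj)).1
      · by_cases hjv : j = v
        · subst hjv
          have h5 := (hYvS ⟨i, hadj.ne⟩ ((hmemS i).mpr hadj.symm)).2
          rw [h5]
          exact hXvsymm _ _
        · rw [hYZ ⟨i, hiv⟩ ⟨j, hjv⟩]
          exact hZedges ⟨i, hiv⟩ ⟨j, hjv⟩ hadj

end Aux

/-- PSD matrix completion over chordal patterns: let `G` be a chordal
simple graph on `{1, …, n}` and `X` a symmetric partial matrix specified on the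
diagonal and on the edges of `G`. If for every maximal clique `C` of `G` the principal
submatrix `X[C]` is positive semidefinite, then `X` can be completed to a positive
semidefinite matrix, i.e. there is a PSD `X̂ ∈ S^n` agreeing with `X` on the diagonal
and on all positions `(i, j) ∈ E`. -/
theorem chordal_psd_completion (n : ℕ) (G : SimpleGraph (Fin n))
    (hG : IsChordalGraph G)
    (X : Matrix (Fin n) (Fin n) ℝ) (hXsymm : X.IsSymm)
    (hcliques : ∀ C : Finset (Fin n), G.IsClique (C : Set (Fin n)) →
      (∀ D : Finset (Fin n), G.IsClique (D : Set (Fin n)) → C ⊆ D → C = D) →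
      (X.submatrix (fun i : ↥C => (i : Fin n)) (fun i : ↥C => (i : Fin n))).PosSemidef) :
    ∃ Y : Matrix (Fin n) (Fin n) ℝ, Y.PosSemidef ∧
      (∀ i, Y i i = X i i) ∧ ∀ i j, G.Adj i j → Y i j = X i j := by
  classical
  have hchord : ChordalOn G Finset.univ := fun v w hc hl _ => hG v w hc hl
  have hall : ∀ C : Finset (Fin n), G.IsClique (C : Set (Fin n)) →
      (X.submatrix (fun i : ↥C => (i : Fin n)) (fun i : ↥C => (i : Fin n))).PosSemidef := by
    intro C hC
    set F : Finset (Finset (Fin n)) := Finset.univ.powerset.filter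
      (fun D => G.IsClique (D : Set (Fin n)) ∧ C ⊆ D) with hF
    have hCF : C ∈ F := Finset.mem_filter.mpr
      ⟨Finset.mem_powerset.mpr (Finset.subset_univ C), hC, Finset.Subset.refl C⟩
    obtain ⟨D, hDF, hDmax⟩ := Finset.exists_max_image F Finset.card ⟨C, hCF⟩
    rw [hF, Finset.mem_filter] at hDF
    obtain ⟨-, hDclq, hCD⟩ := hDF
    have hDmaximal : ∀ D' : Finset (Fin n), G.IsClique (D' : Set (Fin n)) → D ⊆ D' → D = D' := by
      intro D' hD' hsub
      refine Finset.eq_of_subset_of_card_le hsub ?_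
      exact hDmax D' (Finset.mem_filter.mpr
        ⟨Finset.mem_powerset.mpr (Finset.subset_univ _), hD', hCD.trans hsub⟩)
    have hpsd := (hcliques D hDclq hDmaximal).submatrix
      (fun i : ↥C => (⟨(i : Fin n), hCD i.2⟩ : ↥D))
    rw [Matrix.submatrix_submatrix] at hpsd
    exact hpsd
  exact completion_aux (Fintype.card (Fin n)) rfl G hchord X hXsymm hall
end
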